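/- arXiv:2208.08810 — 6 statements merged into one kernel-verified Lean document; each statement's English description precedes it below -/
import Mathlib

section
/- For any measure function h, the dyadic Hausdorff content M_{h,d} is continuous along increasing unions: if A_n is an increasing sequence of subsets of 𝕋 with union A = ∪_n A_n, then M_{h,d}(A) = lim_{n→∞} M_{h,d}(A_n). -/
open MeasureTheory Set Filter Topology
open scoped ENNReal

noncomputable section

/-- The unit circle `𝕋` as a subset of `ℂ`. -/
def unitCircleSet : Set ℂ := Metric.sphere 0 1

/-- The normalized arclength (Lebesgue) measure `m` on the unit circle `𝕋`,
viewed as a Borel measure on `ℂ`, normalized so that `m(𝕋) = 1`. -/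
def mC : Measure ℂ :=
  (ENNReal.ofReal (2 * Real.pi))⁻¹ •
    Measure.map (circleMap 0 1) (volume.restrict (Set.Ioc 0 (2 * Real.pi)))

/-- An open arc of the unit circle. -/
def IsOpenArc (A : Set ℂ) : Prop :=
  ∃ a b : ℝ, a < b ∧ b - a ≤ 2 * Real.pi ∧ A = circleMap 0 1 '' Set.Ioo a b

/-- A closed arc of the unit circle. -/
def IsClosedArc (A : Set ℂ) : Prop :=
  ∃ a b : ℝ, a < b ∧ b - a ≤ 2 * Real.pi ∧ A = circleMap 0 1 '' Set.Icc a b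

/-- The dyadic arcs `d_{n,j} = { e^{it} : t ∈ [2π 2⁻ⁿ j, 2π 2⁻ⁿ (j+1)] }`. -/
def IsDyadicArc (A : Set ℂ) : Prop :=
  ∃ n j : ℕ, j < 2 ^ n ∧
    A = circleMap 0 1 ''
      Set.Icc (2 * Real.pi * j / 2 ^ n) (2 * Real.pi * (j + 1) / 2 ^ n)

/-- A measure function: an increasing continuous function `h` with `h 0 = 0`, such that
`t ↦ h t / t` is decreasing and tends to `+∞` as `t → 0⁺`. -/
structure IsMeasureFunction (h : ℝ → ℝ) : Prop where
  continuousOn : ContinuousOn h (Set.Ici 0)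
  monotoneOn : MonotoneOn h (Set.Ici 0)
  map_zero : h 0 = 0
  antitoneOn : AntitoneOn (fun t => h t / t) (Set.Ioi 0)
  tendsto_atTop : Filter.Tendsto (fun t => h t / t) (nhdsWithin 0 (Set.Ioi 0)) Filter.atTop

/-- The Hausdorff content `M_h(E)`: the infimum of `Σ_{ℓ ∈ L} h(|ℓ|)` over countable
covers `L` of `E` by open arcs of the circle. -/
def hausdorffContent (h : ℝ → ℝ) (E : Set ℂ) : ℝ≥0∞ :=
  ⨅ (L : Set (Set ℂ)) (_ : L.Countable) (_ : ∀ ℓ ∈ L, IsOpenArc ℓ)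
    (_ : E ⊆ ⋃₀ L), ∑' ℓ : L, ENNReal.ofReal (h (mC ↑ℓ).toReal)

/-- The dyadic Hausdorff content `M_{h,d}(E)`: as `M_h(E)` but with covers by dyadic arcs. -/
def dyadicContent (h : ℝ → ℝ) (E : Set ℂ) : ℝ≥0∞ :=
  ⨅ (L : Set (Set ℂ)) (_ : L.Countable) (_ : ∀ d ∈ L, IsDyadicArc d)
    (_ : E ⊆ ⋃₀ L), ∑' d : L, ENNReal.ofReal (h (mC ↑d).toReal)

/-- The small Hausdorff content `M⁰_h(E)`: as `M_h(E)`, but the cover is only required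
to cover `E` up to a set of Lebesgue measure zero. -/
def hausdorffContent0 (h : ℝ → ℝ) (E : Set ℂ) : ℝ≥0∞ :=
  ⨅ (L : Set (Set ℂ)) (_ : L.Countable) (_ : ∀ ℓ ∈ L, IsOpenArc ℓ)
    (_ : mC (E \ ⋃₀ L) = 0), ∑' ℓ : L, ENNReal.ofReal (h (mC ↑ℓ).toReal)

/-- The small dyadic Hausdorff content `M⁰_{h,d}(E)`. -/
def dyadicContent0 (h : ℝ → ℝ) (E : Set ℂ) : ℝ≥0∞ :=
  ⨅ (L : Set (Set ℂ)) (_ : L.Countable) (_ : ∀ d ∈ L, IsDyadicArc d)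
    (_ : mC (E \ ⋃₀ L) = 0), ∑' d : L, ENNReal.ofReal (h (mC ↑d).toReal)

/-- An `h`-Carleson set: a closed subset `A` of the circle whose complement `𝕋 \ A`
is a countable union `⋃ L` of open arcs with `Σ_{ℓ ∈ L} h(|ℓ|) < ∞`.  (For nonempty `A`
this is equivalent to the usual definition via the decomposition of `𝕋 \ A` into its
connected components, i.e. into countably many pairwise disjoint open arcs, by
subadditivity of `h`.) -/
def IsHCarleson (h : ℝ → ℝ) (A : Set ℂ) : Prop :=
  A ⊆ unitCircleSet ∧ IsClosed A ∧
    ∃ L : Set (Set ℂ), L.Countable ∧ (∀ ℓ ∈ L, IsOpenArc ℓ) ∧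
      unitCircleSet \ A = ⋃₀ L ∧
      ∑' ℓ : L, ENNReal.ofReal (h (mC ↑ℓ).toReal) ≠ ⊤

/-- `(core, res)` is a core-residual decomposition of `E` with respect to `h`:
`core` and `res` are disjoint measurable sets with `E = (res ∪ core) \ N` for some
Lebesgue-null set `N`; every `h`-Carleson set almost contained in `E` is almost
contained in `core`; and `core` is, up to a null set, a countable union of
`h`-Carleson sets almost contained in `E`. -/
def IsCoreResidualDecomp (h : ℝ → ℝ) (E core res : Set ℂ) : Prop :=
  MeasurableSet core ∧ MeasurableSet res ∧ Disjoint core res ∧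
    (∃ N : Set ℂ, mC N = 0 ∧ E = (res ∪ core) \ N) ∧
    (∀ A : Set ℂ, IsHCarleson h A → mC (A \ E) = 0 → mC (A \ core) = 0) ∧
    (∃ G : ℕ → Set ℂ, (∀ n, IsHCarleson h (G n) ∧ mC (G n \ E) = 0) ∧
      mC ((core \ ⋃ n, G n) ∪ ((⋃ n, G n) \ core)) = 0)

/-- The measure function `h(t) = t log(e/t)` defining Beurling-Carleson sets. -/
def hBC : ℝ → ℝ := fun t => t * Real.log (Real.exp 1 / t)

/-- A Beurling-Carleson set. -/
def IsBeurlingCarleson (A : Set ℂ) : Prop := IsHCarleson hBC A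

/-! ### Auxiliary development -/

section Aux

open Real

lemma twoPiPos : (0:ℝ) < 2 * Real.pi := by positivity

/-- The angle `2π x / 2ⁿ`. -/
def aR (n : ℕ) (x : ℝ) : ℝ := 2 * Real.pi * x / 2 ^ n

/-- The dyadic arc of generation `n`, index `j`. -/
def dArc (n j : ℕ) : Set ℂ :=
  circleMap 0 1 '' Set.Icc (aR n (j : ℝ)) (aR n ((j : ℝ) + 1))

lemma isDyadicArc_iff {d : Set ℂ} :
    IsDyadicArc d ↔ ∃ n j : ℕ, j < 2 ^ n ∧ d = dArc n j := Iff.rfl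

lemma aR_le_aR_iff {n : ℕ} {x y : ℝ} : aR n x ≤ aR n y ↔ x ≤ y := by
  unfold aR
  have h2 : (0:ℝ) < 2 ^ n := by positivity
  have hπ := Real.pi_pos
  rw [div_le_div_iff_of_pos_right h2]
  constructor
  · intro h'; nlinarith
  · intro h'; nlinarith

lemma aR_lt_aR_iff {n : ℕ} {x y : ℝ} : aR n x < aR n y ↔ x < y := by
  simp only [lt_iff_not_ge, aR_le_aR_iff]

lemma aR_zero {n : ℕ} : aR n 0 = 0 := by simp [aR]

lemma aR_pow {n : ℕ} : aR n ((2:ℝ) ^ n) = 2 * Real.pi := by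
  unfold aR
  have h2 : ((2:ℝ) ^ n) ≠ 0 := by positivity
  field_simp

lemma aR_shift {n m : ℕ} (hnm : n ≤ m) (x : ℝ) : aR n x = aR m (x * 2 ^ (m - n)) := by
  unfold aR
  have h : (2:ℝ) ^ m = 2 ^ n * 2 ^ (m - n) := by
    rw [← pow_add]; congr 1; omega
  have h1 : ((2:ℝ) ^ n) ≠ 0 := by positivity
  have h2 : ((2:ℝ) ^ (m - n)) ≠ 0 := by positivity
  rw [h]
  field_simp

lemma mem_Icc_02pi {n j : ℕ} (hj : j + 1 ≤ 2 ^ n) {x : ℝ}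
    (hx : x ∈ Set.Icc (aR n (j:ℝ)) (aR n ((j:ℝ) + 1))) : x ∈ Set.Icc 0 (2 * Real.pi) := by
  have hcast : ((j:ℝ) + 1) ≤ 2 ^ n := by
    have : ((j+1:ℕ):ℝ) ≤ ((2^n:ℕ):ℝ) := Nat.cast_le.mpr hj
    push_cast at this; linarith
  constructor
  · have h0 : (0:ℝ) ≤ aR n (j:ℝ) := by
      rw [show (0:ℝ) = aR n 0 from aR_zero.symm]
      exact aR_le_aR_iff.mpr (by positivity)
    exact le_trans h0 hx.1
  · have h1 : aR n ((j:ℝ)+1) ≤ aR n ((2:ℝ)^n) := aR_le_aR_iff.mpr hcast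
    rw [aR_pow] at h1
    exact le_trans hx.2 h1

lemma measurable_circleMap01 : Measurable (circleMap 0 1) :=
  (continuous_circleMap 0 1).measurable

lemma measurableSet_image_Icc {a b : ℝ} :
    MeasurableSet (circleMap 0 1 '' Set.Icc a b) :=
  ((isCompact_Icc.image (continuous_circleMap 0 1)).isClosed).measurableSet

lemma circleMap_eq_imp {s t : ℝ} (hst : circleMap 0 1 s = circleMap 0 1 t) :
    ∃ k : ℤ, s = t + k * (2 * Real.pi) := by
  have h : Complex.exp (s * Complex.I) = Complex.exp (t * Complex.I) := by
    simpa [circleMap] using hst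
  obtain ⟨k, hk⟩ := Complex.exp_eq_exp_iff_exists_int.mp h
  refine ⟨k, ?_⟩
  have h3 : ((s : ℝ) : ℂ) * Complex.I = ((t + (k:ℝ) * (2 * Real.pi) : ℝ) : ℂ) * Complex.I := by
    rw [hk]; push_cast; ring
  have h4 := mul_right_cancel₀ Complex.I_ne_zero h3
  exact_mod_cast h4

lemma angle_reduce {s t : ℝ} (hs : s ∈ Set.Icc 0 (2*Real.pi)) (ht : t ∈ Set.Icc 0 (2*Real.pi))
    (h : circleMap 0 1 s = circleMap 0 1 t) :
    s = t ∨ (s = 0 ∧ t = 2*Real.pi) ∨ (s = 2*Real.pi ∧ t = 0) := by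
  obtain ⟨k, hk⟩ := circleMap_eq_imp h
  obtain ⟨hs0, hs2⟩ := hs
  obtain ⟨ht0, ht2⟩ := ht
  have hπ := Real.pi_pos
  have hk1 : k ≤ 1 := by
    by_contra hcon
    push_neg at hcon
    have h2 : (2:ℝ) ≤ (k:ℝ) := by exact_mod_cast hcon
    nlinarith
  have hk2 : (-1:ℤ) ≤ k := by
    by_contra hcon
    push_neg at hcon
    have h2 : (k:ℝ) ≤ -2 := by exact_mod_cast (by omega : k ≤ -2)
    nlinarith
  interval_cases k
  · push_cast at hk
    right; left; constructor <;> linarith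
  · push_cast at hk
    left; linarith
  · push_cast at hk
    right; right; constructor <;> linarith

lemma mC_image_Icc {a b : ℝ} (ha : 0 ≤ a) (hab : a ≤ b) (hb : b ≤ 2 * Real.pi) :
    mC (circleMap 0 1 '' Set.Icc a b) = ENNReal.ofReal ((b - a) / (2 * Real.pi)) := by
  have hπ := Real.pi_pos
  have hmeas := measurableSet_image_Icc (a := a) (b := b)
  have hpre : MeasurableSet (circleMap 0 1 ⁻¹' (circleMap 0 1 '' Set.Icc a b)) :=
    measurable_circleMap01 hmeas
  rw [mC, Measure.smul_apply, Measure.map_apply measurable_circleMap01 hmeas,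
    Measure.restrict_apply hpre]
  have hvol : volume (circleMap 0 1 ⁻¹' (circleMap 0 1 '' Set.Icc a b) ∩ Set.Ioc 0 (2*Real.pi))
      = ENNReal.ofReal (b - a) := by
    apply le_antisymm
    · have hsub : circleMap 0 1 ⁻¹' (circleMap 0 1 '' Set.Icc a b) ∩ Set.Ioc 0 (2*Real.pi)
          ⊆ Set.Icc a b ∪ {2*Real.pi} := by
        rintro x ⟨hx1, hx2⟩
        obtain ⟨y, hy, hxy⟩ := hx1
        have hxIcc : x ∈ Set.Icc 0 (2*Real.pi) := ⟨le_of_lt hx2.1, hx2.2⟩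
        have hyIcc : y ∈ Set.Icc 0 (2*Real.pi) := ⟨le_trans ha hy.1, le_trans hy.2 hb⟩
        rcases angle_reduce hxIcc hyIcc hxy.symm with he | he | he
        · exact Or.inl (he ▸ hy)
        · exact absurd he.1 (ne_of_gt hx2.1)
        · exact Or.inr he.1
      calc volume _ ≤ volume (Set.Icc a b ∪ {2*Real.pi}) := measure_mono hsub
      _ ≤ volume (Set.Icc a b) + volume ({2*Real.pi} : Set ℝ) := measure_union_le _ _
      _ = ENNReal.ofReal (b - a) := by
          simp [Real.volume_Icc, Real.volume_singleton]
    · calc ENNReal.ofReal (b - a) = volume (Set.Ioc a b) := (Real.volume_Ioc).symm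
      _ ≤ _ := by
          apply measure_mono
          rintro x hx
          exact ⟨⟨x, ⟨le_of_lt hx.1, hx.2⟩, rfl⟩, ⟨lt_of_le_of_lt ha hx.1, le_trans hx.2 hb⟩⟩
  rw [hvol, smul_eq_mul, ENNReal.ofReal_div_of_pos twoPiPos, ENNReal.div_eq_inv_mul]

lemma mC_dArc {n j : ℕ} (hj : j + 1 ≤ 2 ^ n) :
    mC (dArc n j) = ENNReal.ofReal ((2 ^ n : ℝ))⁻¹ := by
  have hπ := Real.pi_pos
  have hcast : ((j:ℝ) + 1) ≤ 2 ^ n := by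
    have : ((j+1:ℕ):ℝ) ≤ ((2^n:ℕ):ℝ) := Nat.cast_le.mpr hj
    push_cast at this; linarith
  have h0 : (0:ℝ) ≤ aR n (j:ℝ) := by
    rw [show (0:ℝ) = aR n 0 from aR_zero.symm]
    exact aR_le_aR_iff.mpr (by positivity)
  have h1 : aR n (j:ℝ) ≤ aR n ((j:ℝ)+1) := aR_le_aR_iff.mpr (by linarith)
  have h2 : aR n ((j:ℝ)+1) ≤ 2*Real.pi := by
    calc aR n ((j:ℝ)+1) ≤ aR n ((2:ℝ)^n) := aR_le_aR_iff.mpr hcast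
    _ = 2*Real.pi := aR_pow
  rw [dArc, mC_image_Icc h0 h1 h2]
  congr 1
  unfold aR
  have h3 : ((2:ℝ) ^ n) ≠ 0 := by positivity
  field_simp
  ring

lemma mC_dArc_toReal {n j : ℕ} (hj : j + 1 ≤ 2 ^ n) :
    (mC (dArc n j)).toReal = ((2:ℝ) ^ n)⁻¹ := by
  rw [mC_dArc hj, ENNReal.toReal_ofReal (by positivity)]

lemma subset_gen_le {n j m i : ℕ} (hj : j + 1 ≤ 2 ^ n) (hi : i + 1 ≤ 2 ^ m)
    (hsub : dArc n j ⊆ dArc m i) : m ≤ n := by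
  have hm := measure_mono (μ := mC) hsub
  rw [mC_dArc hj, mC_dArc hi] at hm
  rw [ENNReal.ofReal_le_ofReal_iff (by positivity)] at hm
  have hn : (0:ℝ) < 2 ^ n := by positivity
  have hmp : (0:ℝ) < 2 ^ m := by positivity
  rw [← one_div, ← one_div, div_le_div_iff₀ hn hmp] at hm
  have h2 : (2:ℝ) ^ m ≤ 2 ^ n := by linarith
  have h3 : (2:ℕ) ^ m ≤ 2 ^ n := by exact_mod_cast h2
  by_contra hcon
  push_neg at hcon
  have := Nat.pow_lt_pow_right (a := 2) (by norm_num) hcon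
  omega

lemma same_gen_eq {n j i : ℕ} (hj : j + 1 ≤ 2 ^ n) (hi : i + 1 ≤ 2 ^ n)
    (hsub : dArc n j ⊆ dArc n i) : j = i := by
  have hπ := Real.pi_pos
  have hcj : ((j:ℝ) + 1) ≤ 2 ^ n := by
    have : ((j+1:ℕ):ℝ) ≤ ((2^n:ℕ):ℝ) := Nat.cast_le.mpr hj
    push_cast at this; linarith
  set s : ℝ := aR n ((j:ℝ) + 1/2) with hs
  have hmem : circleMap 0 1 s ∈ dArc n j :=
    ⟨s, ⟨aR_le_aR_iff.mpr (by linarith), aR_le_aR_iff.mpr (by linarith)⟩, rfl⟩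
  obtain ⟨b, hb, hbs⟩ := hsub hmem
  have hbIcc : b ∈ Set.Icc 0 (2*Real.pi) := mem_Icc_02pi hi hb
  have hs_pos : 0 < s := by
    rw [hs, show (0:ℝ) = aR n 0 from aR_zero.symm]
    exact aR_lt_aR_iff.mpr (by positivity)
  have hs_lt : s < 2*Real.pi := by
    rw [hs, show 2*Real.pi = aR n ((2:ℝ)^n) from aR_pow.symm]
    exact aR_lt_aR_iff.mpr (by linarith)
  have hsIcc : s ∈ Set.Icc 0 (2*Real.pi) := ⟨le_of_lt hs_pos, le_of_lt hs_lt⟩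
  rcases angle_reduce hbIcc hsIcc hbs with he | he | he
  · rw [he] at hb
    have e1 : (i:ℝ) ≤ (j:ℝ) + 1/2 := aR_le_aR_iff.mp hb.1
    have e2 : (j:ℝ) + 1/2 ≤ (i:ℝ) + 1 := aR_le_aR_iff.mp hb.2
    have f1 : (i:ℝ) < (j:ℝ) + 1 := by linarith
    have f2 : (j:ℝ) < (i:ℝ) + 1 := by linarith
    have g1 : i < j + 1 := by exact_mod_cast (by push_cast; linarith : (i:ℝ) < ((j+1:ℕ):ℝ))
    have g2 : j < i + 1 := by exact_mod_cast (by push_cast; linarith : (j:ℝ) < ((i+1:ℕ):ℝ))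
    omega
  · exact absurd he.2 (ne_of_lt hs_lt)
  · exact absurd he.2 (ne_of_gt hs_pos)

lemma nat_lt_div_succ_mul {i k : ℕ} (hk : 0 < k) : i < (i / k + 1) * k := by
  have h1 := Nat.div_add_mod i k
  have h2 := Nat.mod_lt i hk
  nlinarith [Nat.div_add_mod i k]

lemma dArc_ancestor {n m i : ℕ} (hnm : n ≤ m) (hi : i + 1 ≤ 2 ^ m) :
    dArc m i ⊆ dArc n (i / 2 ^ (m - n)) ∧ i / 2 ^ (m - n) + 1 ≤ 2 ^ n := by
  have hk : (0:ℕ) < 2 ^ (m - n) := Nat.pow_pos (by norm_num)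
  have hpow : (2:ℕ) ^ n * 2 ^ (m - n) = 2 ^ m := by
    rw [← pow_add]; congr 1; omega
  constructor
  · apply Set.image_mono
    apply Set.Icc_subset_Icc
    · rw [aR_shift hnm]
      apply aR_le_aR_iff.mpr
      have h1 : (i / 2 ^ (m - n)) * 2 ^ (m - n) ≤ i := Nat.div_mul_le_self i _
      calc ((i / 2 ^ (m - n) : ℕ) : ℝ) * 2 ^ (m - n)
          = (((i / 2 ^ (m - n)) * 2 ^ (m - n) : ℕ) : ℝ) := by push_cast; ring
      _ ≤ (i : ℝ) := Nat.cast_le.mpr h1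
    · rw [aR_shift hnm]
      apply aR_le_aR_iff.mpr
      have h2 : i + 1 ≤ (i / 2 ^ (m - n) + 1) * 2 ^ (m - n) := nat_lt_div_succ_mul hk
      calc ((i:ℝ) + 1) = ((i + 1 : ℕ) : ℝ) := by push_cast; ring
      _ ≤ (((i / 2 ^ (m - n) + 1) * 2 ^ (m - n) : ℕ) : ℝ) := Nat.cast_le.mpr h2
      _ = ((i / 2 ^ (m - n) : ℕ) : ℝ) * 2 ^ (m - n) + 2 ^ (m - n) := by push_cast; ring
      _ = (((i / 2 ^ (m - n) : ℕ) : ℝ) + 1) * 2 ^ (m - n) := by ring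
  · have h3 : i / 2 ^ (m - n) < 2 ^ n := by
      rw [Nat.div_lt_iff_lt_mul hk]
      calc i < 2 ^ m := by omega
      _ = 2 ^ n * 2 ^ (m - n) := hpow.symm
    omega

/-- The countable set of endpoints of dyadic arcs. -/
def Edp : Set ℂ := {x | ∃ n j : ℕ, j ≤ 2 ^ n ∧ x = circleMap 0 1 (aR n (j:ℝ))}

lemma countable_Edp : Edp.Countable := by
  have hsub : Edp ⊆ Set.range (fun p : ℕ × ℕ => circleMap 0 1 (aR p.1 (p.2 : ℝ))) := by
    rintro x ⟨n, j, _, rfl⟩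
    exact ⟨(n, j), rfl⟩
  exact (Set.countable_range _).mono hsub

lemma net_aux {n m j i : ℕ} (hnm : n ≤ m) (hj : j + 1 ≤ 2 ^ n) (hi : i + 1 ≤ 2 ^ m)
    {x : ℂ} (hxj : x ∈ dArc n j) (hxi : x ∈ dArc m i) :
    dArc m i ⊆ dArc n j ∨ x ∈ Edp := by
  obtain ⟨hanc, hq⟩ := dArc_ancestor hnm hi
  set q := i / 2 ^ (m - n) with hqdef
  by_cases hqj : q = j
  · left; rw [← hqj]; exact hanc
  · right
    obtain ⟨s, hsI, hsx⟩ := hxj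
    obtain ⟨t', htI', htx'⟩ := hanc hxi
    have hs2 := mem_Icc_02pi hj hsI
    have ht2 := mem_Icc_02pi hq htI'
    rcases angle_reduce hs2 ht2 (hsx.trans htx'.symm) with he | he | he
    · rcases Nat.lt_or_ge j q with hlt | hge
      · have e1 : s ≤ aR n ((j:ℝ)+1) := hsI.2
        have e3 : aR n ((j:ℝ)+1) ≤ aR n (q:ℝ) := by
          apply aR_le_aR_iff.mpr
          have : ((j+1:ℕ):ℝ) ≤ (q:ℝ) := Nat.cast_le.mpr hlt
          push_cast at this; linarith
        have e2 : aR n (q:ℝ) ≤ s := by rw [he]; exact htI'.1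
        have hse : s = aR n ((j:ℝ)+1) := le_antisymm e1 (by linarith)
        refine ⟨n, j+1, hj, ?_⟩
        rw [← hsx, hse]
        congr 1
        push_cast
        ring
      · have hlt : q < j := by omega
        have e1 : aR n (j:ℝ) ≤ s := hsI.1
        have e3 : aR n ((q:ℝ)+1) ≤ aR n (j:ℝ) := by
          apply aR_le_aR_iff.mpr
          have : ((q+1:ℕ):ℝ) ≤ (j:ℝ) := Nat.cast_le.mpr hlt
          push_cast at this; linarith
        have e2 : s ≤ aR n ((q:ℝ)+1) := by rw [he]; exact htI'.2
        have hse : s = aR n (j:ℝ) := le_antisymm (by linarith) e1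
        exact ⟨n, j, by omega, by rw [← hsx, hse]⟩
    · refine ⟨0, 0, by norm_num, ?_⟩
      rw [← hsx, he.1]
      norm_num [aR]
    · refine ⟨0, 1, by norm_num, ?_⟩
      rw [← hsx, he.1]
      norm_num [aR]

lemma net_general {u v : Set ℂ} (hu : IsDyadicArc u) (hv : IsDyadicArc v) {x : ℂ}
    (hxu : x ∈ u) (hxv : x ∈ v) : u ⊆ v ∨ v ⊆ u ∨ x ∈ Edp := by
  obtain ⟨n, j, hj, rfl⟩ := isDyadicArc_iff.mp hu
  obtain ⟨m, i, hi, rfl⟩ := isDyadicArc_iff.mp hv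
  rcases le_total n m with hnm | hmn
  · rcases net_aux hnm (by omega) (by omega) hxu hxv with h' | h'
    · exact Or.inr (Or.inl h')
    · exact Or.inr (Or.inr h')
  · rcases net_aux hmn (by omega) (by omega) hxv hxu with h' | h'
    · exact Or.inl h'
    · exact Or.inr (Or.inr h')

open Classical in
/-- Generation of a dyadic arc (via choice). -/
def genOf (d : Set ℂ) : ℕ := if hd : IsDyadicArc d then hd.choose else 0

open Classical in
def idxOf (d : Set ℂ) : ℕ := if hd : IsDyadicArc d then hd.choose_spec.choose else 0

lemma genOf_spec {d : Set ℂ} (hd : IsDyadicArc d) :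
    idxOf d < 2 ^ genOf d ∧ d = dArc (genOf d) (idxOf d) := by
  classical
  simp only [genOf, idxOf]
  rw [dif_pos hd, dif_pos hd]
  exact hd.choose_spec.choose_spec

lemma gen_le_of_subset {d q : Set ℂ} (hd : IsDyadicArc d) (hq : IsDyadicArc q)
    (hsub : d ⊆ q) : genOf q ≤ genOf d := by
  obtain ⟨hd1, hd2⟩ := genOf_spec hd
  obtain ⟨hq1, hq2⟩ := genOf_spec hq
  exact subset_gen_le (n := genOf d) (j := idxOf d) (m := genOf q) (i := idxOf q)
    (by omega) (by omega) (by rw [← hd2, ← hq2]; exact hsub)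

lemma eq_of_subset_of_gen_eq {d q : Set ℂ} (hd : IsDyadicArc d) (hq : IsDyadicArc q)
    (hsub : d ⊆ q) (hgen : genOf q = genOf d) : d = q := by
  obtain ⟨hd1, hd2⟩ := genOf_spec hd
  obtain ⟨hq1, hq2⟩ := genOf_spec hq
  rw [hgen] at hq2 hq1
  have hji : idxOf d = idxOf q := by
    apply same_gen_eq (n := genOf d) (by omega) (by omega)
    rw [← hd2, ← hq2]; exact hsub
  rw [hd2, hq2, hji]

lemma gen_lt_of_ssubset {d q : Set ℂ} (hd : IsDyadicArc d) (hq : IsDyadicArc q)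
    (hsub : d ⊆ q) (hne : d ≠ q) : genOf q < genOf d :=
  lt_of_le_of_ne (gen_le_of_subset hd hq hsub)
    (fun he => hne (eq_of_subset_of_gen_eq hd hq hsub he))

end Aux

section CostLayer

/-- Weight of an arc. -/
def wgt (h : ℝ → ℝ) (d : Set ℂ) : ℝ≥0∞ := ENNReal.ofReal (h (mC d).toReal)

/-- Total cost of a family of arcs. -/
def cost (h : ℝ → ℝ) (S : Set (Set ℂ)) : ℝ≥0∞ := ∑' d : S, wgt h d

lemma cost_def (h : ℝ → ℝ) (S : Set (Set ℂ)) :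
    cost h S = ∑' d : Set ℂ, S.indicator (wgt h) d := tsum_subtype S (wgt h)

lemma indicator_le_apply (S : Set (Set ℂ)) (f : Set ℂ → ℝ≥0∞) (d : Set ℂ) :
    S.indicator f d ≤ f d := by
  classical
  by_cases hd : d ∈ S
  · rw [Set.indicator_of_mem hd]
  · rw [Set.indicator_of_notMem hd]; exact zero_le

lemma cost_mono {h : ℝ → ℝ} {S T : Set (Set ℂ)} (hST : S ⊆ T) : cost h S ≤ cost h T := by
  rw [cost_def, cost_def]
  refine ENNReal.tsum_le_tsum fun d => ?_
  classical
  by_cases hd : d ∈ S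
  · rw [Set.indicator_of_mem hd, Set.indicator_of_mem (hST hd)]
  · rw [Set.indicator_of_notMem hd]; exact zero_le

lemma cost_union_le (h : ℝ → ℝ) (U V : Set (Set ℂ)) :
    cost h (U ∪ V) ≤ cost h U + cost h V := by
  rw [cost_def, cost_def, cost_def, ← ENNReal.tsum_add]
  refine ENNReal.tsum_le_tsum fun d => ?_
  classical
  by_cases hU : d ∈ U
  · rw [Set.indicator_of_mem (Set.mem_union_left _ hU), Set.indicator_of_mem hU]
    exact le_self_add
  · by_cases hV : d ∈ V
    · rw [Set.indicator_of_mem (Set.mem_union_right _ hV), Set.indicator_of_mem hV]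
      exact le_add_self
    · rw [Set.indicator_of_notMem (by simp [hU, hV])]
      exact zero_le

/-- Maximal elements of a family of sets. -/
def MaxOf (T : Set (Set ℂ)) : Set (Set ℂ) := {d | d ∈ T ∧ ∀ q ∈ T, d ⊆ q → d = q}

/-- The "minimum" family in the surgery. -/
def MinOf (U V : Set (Set ℂ)) : Set (Set ℂ) :=
  {d | (d ∈ U ∧ ∃ v ∈ V, d ⊆ v ∧ d ≠ v) ∨ (d ∈ V ∧ ∃ u ∈ U, d ⊆ u)}

lemma maxOf_subset {T : Set (Set ℂ)} : MaxOf T ⊆ T := fun _ hd => hd.1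

lemma minOf_subset {U V : Set (Set ℂ)} : MinOf U V ⊆ U ∪ V := by
  rintro d (⟨hd, _⟩ | ⟨hd, _⟩)
  · exact Or.inl hd
  · exact Or.inr hd

lemma cost_surgery (h : ℝ → ℝ) (U V : Set (Set ℂ)) :
    cost h (MaxOf (U ∪ V)) + cost h (MinOf U V) ≤ cost h U + cost h V := by
  rw [cost_def, cost_def, cost_def, cost_def, ← ENNReal.tsum_add, ← ENNReal.tsum_add]
  refine ENNReal.tsum_le_tsum fun d => ?_
  classical
  by_cases hU : d ∈ U <;> by_cases hV : d ∈ V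
  · rw [Set.indicator_of_mem hU, Set.indicator_of_mem hV]
    exact add_le_add (indicator_le_apply _ _ _) (indicator_le_apply _ _ _)
  · rw [Set.indicator_of_mem hU, Set.indicator_of_notMem hV, add_zero]
    by_cases hmax : d ∈ MaxOf (U ∪ V)
    · have hmin : d ∉ MinOf U V := by
        rintro (⟨_, v, hvV, hsub, hne⟩ | ⟨hdV, _⟩)
        · exact hne (hmax.2 v (Or.inr hvV) hsub)
        · exact hV hdV
      rw [Set.indicator_of_mem hmax, Set.indicator_of_notMem hmin, add_zero]
    · rw [Set.indicator_of_notMem hmax, zero_add]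
      exact indicator_le_apply _ _ _
  · rw [Set.indicator_of_notMem hU, Set.indicator_of_mem hV, zero_add]
    by_cases hmax : d ∈ MaxOf (U ∪ V)
    · have hmin : d ∉ MinOf U V := by
        rintro (⟨hdU, _⟩ | ⟨_, u, huU, hsub⟩)
        · exact hU hdU
        · have he := hmax.2 u (Or.inl huU) hsub
          exact hU (by rw [he]; exact huU)
      rw [Set.indicator_of_mem hmax, Set.indicator_of_notMem hmin, add_zero]
    · rw [Set.indicator_of_notMem hmax, zero_add]
      exact indicator_le_apply _ _ _
  · have h1 : d ∉ MaxOf (U ∪ V) := fun hd => hd.1.elim hU hV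
    have h2 : d ∉ MinOf U V := by
      rintro (⟨hdU, _⟩ | ⟨hdV, _⟩)
      · exact hU hdU
      · exact hV hdV
    rw [Set.indicator_of_notMem hU, Set.indicator_of_notMem hV,
      Set.indicator_of_notMem h1, Set.indicator_of_notMem h2]

lemma exists_maximal {T : Set (Set ℂ)} (hT : ∀ d ∈ T, IsDyadicArc d) :
    ∀ d ∈ T, ∃ q ∈ MaxOf T, d ⊆ q := by
  have key : ∀ N : ℕ, ∀ d ∈ T, genOf d ≤ N → ∃ q ∈ MaxOf T, d ⊆ q := by
    intro N
    induction N with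
    | zero =>
      intro d hd hg
      by_cases hmax : ∀ q ∈ T, d ⊆ q → d = q
      · exact ⟨d, ⟨hd, hmax⟩, subset_rfl⟩
      · push_neg at hmax
        obtain ⟨q, hqT, hsub, hne⟩ := hmax
        have := gen_lt_of_ssubset (hT d hd) (hT q hqT) hsub hne
        omega
    | succ N ih =>
      intro d hd hg
      by_cases hmax : ∀ q ∈ T, d ⊆ q → d = q
      · exact ⟨d, ⟨hd, hmax⟩, subset_rfl⟩
      · push_neg at hmax
        obtain ⟨q, hqT, hsub, hne⟩ := hmax
        have hlt := gen_lt_of_ssubset (hT d hd) (hT q hqT) hsub hne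
        obtain ⟨r, hr, hqr⟩ := ih q hqT (by omega)
        exact ⟨r, hr, hsub.trans hqr⟩
  exact fun d hd => key (genOf d) d hd le_rfl

lemma sUnion_le_maxOf {T : Set (Set ℂ)} (hT : ∀ d ∈ T, IsDyadicArc d) :
    ⋃₀ T ⊆ ⋃₀ MaxOf T := by
  rintro x ⟨d, hd, hxd⟩
  obtain ⟨q, hq, hsub⟩ := exists_maximal hT d hd
  exact ⟨q, hq, hsub hxd⟩

lemma mem_minOf_cover {U V : Set (Set ℂ)} (hU : ∀ d ∈ U, IsDyadicArc d)
    (hV : ∀ d ∈ V, IsDyadicArc d) {x : ℂ}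
    (hxU : x ∈ ⋃₀ U) (hxV : x ∈ ⋃₀ V) (hxE : x ∉ Edp) : x ∈ ⋃₀ MinOf U V := by
  obtain ⟨u, huU, hxu⟩ := hxU
  obtain ⟨v, hvV, hxv⟩ := hxV
  rcases net_general (hU u huU) (hV v hvV) hxu hxv with hsub | hsub | hE
  · by_cases he : u = v
    · exact ⟨v, Or.inr ⟨hvV, u, huU, by rw [← he]⟩, hxv⟩
    · exact ⟨u, Or.inl ⟨huU, v, hvV, hsub, he⟩, hxu⟩
  · exact ⟨v, Or.inr ⟨hvV, u, huU, hsub⟩, hxv⟩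
  · exact absurd hE hxE

lemma dyadicContent_le_cost (h : ℝ → ℝ) {E : Set ℂ} {L : Set (Set ℂ)} (hc : L.Countable)
    (hd : ∀ d ∈ L, IsDyadicArc d) (hcov : E ⊆ ⋃₀ L) :
    dyadicContent h E ≤ cost h L := by
  unfold dyadicContent
  exact iInf_le_of_le L (iInf_le_of_le hc (iInf_le_of_le hd (iInf_le_of_le hcov le_rfl)))

lemma dyadicContent_mono (h : ℝ → ℝ) {E F : Set ℂ} (hEF : E ⊆ F) :
    dyadicContent h E ≤ dyadicContent h F := by
  refine le_iInf fun L => le_iInf fun hc => le_iInf fun hd => le_iInf fun hcov => ?_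
  exact dyadicContent_le_cost h hc hd (hEF.trans hcov)

lemma circle_subset_full : unitCircleSet ⊆ dArc 0 0 := by
  intro z hz
  have hz' : z ∈ Set.range (circleMap 0 1) := by
    rw [range_circleMap]
    simpa [unitCircleSet] using hz
  obtain ⟨θ, rfl⟩ := hz'
  obtain ⟨y, hy, hyθ⟩ := (periodic_circleMap 0 1).exists_mem_Ico₀ twoPiPos θ
  refine ⟨y, ⟨?_, ?_⟩, hyθ.symm⟩
  · simpa [aR] using hy.1
  · have : y < 2 * Real.pi := hy.2
    have h2 : aR 0 ((0:ℕ):ℝ) + 1 = 1 := by norm_num [aR]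
    calc y ≤ 2 * Real.pi := le_of_lt this
    _ = aR 0 (((0:ℕ):ℝ) + 1) := by norm_num [aR]

lemma dyadicContent_ne_top (h : ℝ → ℝ) {E : Set ℂ} (hE : E ⊆ unitCircleSet) :
    dyadicContent h E ≠ ⊤ := by
  have hle : dyadicContent h E ≤ cost h {dArc 0 0} := by
    apply dyadicContent_le_cost h (Set.countable_singleton _)
    · rintro d hd
      rw [Set.mem_singleton_iff] at hd
      rw [hd]
      exact isDyadicArc_iff.mpr ⟨0, 0, by norm_num, rfl⟩
    · rw [Set.sUnion_singleton]
      exact hE.trans circle_subset_full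
  have hcost : cost h {dArc 0 0} = wgt h (dArc 0 0) := by
    rw [cost_def]
    rw [tsum_eq_single (dArc 0 0) ?_]
    · simp
    · intro b hb
      exact Set.indicator_of_notMem (by simpa using hb) _
  rw [hcost] at hle
  exact ne_top_of_le_ne_top ENNReal.ofReal_ne_top hle

lemma exists_cover (h : ℝ → ℝ) {E : Set ℂ} (hE : E ⊆ unitCircleSet) {η : ℝ≥0∞} (hη : η ≠ 0) :
    ∃ L : Set (Set ℂ), L.Countable ∧ (∀ d ∈ L, IsDyadicArc d) ∧ E ⊆ ⋃₀ L ∧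
      cost h L ≤ dyadicContent h E + η := by
  have hlt : dyadicContent h E < dyadicContent h E + η :=
    ENNReal.lt_add_right (dyadicContent_ne_top h hE) hη
  conv_lhs at hlt => rw [dyadicContent]
  simp only [iInf_lt_iff] at hlt
  obtain ⟨L, hc, hd, hcov, hlt⟩ := hlt
  exact ⟨L, hc, hd, hcov, le_of_lt hlt⟩

lemma wgt_tendsto (h : ℝ → ℝ) (hh : IsMeasureFunction h) :
    Filter.Tendsto (fun g : ℕ => ENNReal.ofReal (h (((2:ℝ) ^ g)⁻¹))) Filter.atTop (nhds 0) := by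
  have h1 : Filter.Tendsto (fun g : ℕ => ((2:ℝ) ^ g)⁻¹) Filter.atTop (nhds 0) := by
    apply tendsto_inv_atTop_zero.comp
    exact tendsto_pow_atTop_atTop_of_one_lt one_lt_two
  have h2 : Filter.Tendsto (fun g : ℕ => ((2:ℝ) ^ g)⁻¹) Filter.atTop
      (nhdsWithin 0 (Set.Ici 0)) := by
    apply tendsto_nhdsWithin_of_tendsto_nhds_of_eventually_within _ h1
    exact Filter.Eventually.of_forall fun g => Set.mem_Ici.mpr (by positivity)
  have h3 := ((hh.continuousOn 0 Set.self_mem_Ici).tendsto).comp h2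
  rw [hh.map_zero] at h3
  have h4 := ENNReal.tendsto_ofReal h3
  simpa [Function.comp_def] using h4

lemma exists_small_arc (h : ℝ → ℝ) (hh : IsMeasureFunction h) {x : ℂ} (hx : x ∈ Edp)
    {η : ℝ≥0∞} (hη : η ≠ 0) :
    ∃ d : Set ℂ, IsDyadicArc d ∧ x ∈ d ∧ wgt h d ≤ η := by
  obtain ⟨n, j, hj, hxe⟩ := hx
  have hev : ∀ᶠ g : ℕ in Filter.atTop, ENNReal.ofReal (h (((2:ℝ) ^ g)⁻¹)) < η :=
    (wgt_tendsto h hh).eventually_lt_const (pos_iff_ne_zero.mpr hη)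
  obtain ⟨g, hgw, hgn⟩ := (hev.and (Filter.eventually_ge_atTop n)).exists
  have hwgt : ∀ j' : ℕ, j' + 1 ≤ 2 ^ g → wgt h (dArc g j') ≤ η := by
    intro j' hj'
    rw [wgt, mC_dArc_toReal hj']
    exact le_of_lt hgw
  have hgpos : (0:ℕ) < 2 ^ g := Nat.pow_pos (by norm_num)
  by_cases hje : j = 2 ^ n
  · refine ⟨dArc g 0, isDyadicArc_iff.mpr ⟨g, 0, hgpos, rfl⟩, ?_, hwgt 0 (by omega)⟩
    have hx0 : x = circleMap 0 1 0 := by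
      rw [hxe, hje]
      have h2 : aR n (((2^n : ℕ)):ℝ) = 2 * Real.pi := by
        have hc : (((2^n:ℕ)):ℝ) = (2:ℝ) ^ n := by push_cast; ring
        rw [hc, aR_pow]
      rw [h2]
      have hper := (periodic_circleMap 0 1) 0
      rw [zero_add] at hper
      exact hper
    refine ⟨0, ⟨?_, ?_⟩, hx0.symm⟩
    · simp [aR]
    · rw [show (0:ℝ) = aR g 0 from aR_zero.symm]
      exact aR_le_aR_iff.mpr (by norm_num)
  · have hjlt : j < 2 ^ n := by omega
    have hng : n ≤ g := hgn
    have hkpos : (0:ℕ) < 2 ^ (g - n) := Nat.pow_pos (by norm_num)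
    set j' := j * 2 ^ (g - n) with hj'def
    have hpow : (2:ℕ) ^ n * 2 ^ (g - n) = 2 ^ g := by rw [← pow_add]; congr 1; omega
    have hj'b : j' + 1 ≤ 2 ^ g := by
      have hlt : j' < 2 ^ g := by
        calc j' = j * 2 ^ (g - n) := rfl
        _ < 2 ^ n * 2 ^ (g - n) := by
            exact Nat.mul_lt_mul_of_lt_of_le hjlt (le_refl _) hkpos
        _ = 2 ^ g := hpow
      omega
    refine ⟨dArc g j', isDyadicArc_iff.mpr ⟨g, j', by omega, rfl⟩, ?_, hwgt j' hj'b⟩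
    have hxg : x = circleMap 0 1 (aR g (j':ℝ)) := by
      rw [hxe]
      congr 1
      rw [aR_shift hng (j:ℝ), hj'def]
      congr 1
      push_cast
      ring
    refine ⟨aR g (j':ℝ), ⟨le_rfl, aR_le_aR_iff.mpr (by linarith)⟩, hxg.symm⟩

lemma exists_cheap_cover (h : ℝ → ℝ) (hh : IsMeasureFunction h) {η : ℝ≥0∞} (hη : η ≠ 0) :
    ∃ Z : Set (Set ℂ), Z.Countable ∧ (∀ d ∈ Z, IsDyadicArc d) ∧ Edp ⊆ ⋃₀ Z ∧ cost h Z ≤ η := by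
  have hne : Edp.Nonempty := ⟨circleMap 0 1 (aR 0 ((0:ℕ):ℝ)), 0, 0, by norm_num, rfl⟩
  obtain ⟨f, hf⟩ := countable_Edp.exists_eq_range hne
  have hbud : ∀ i : ℕ, (η * 2⁻¹ ^ (i+1)) ≠ 0 := fun i =>
    mul_ne_zero hη (pow_ne_zero _ (ENNReal.inv_ne_zero.mpr ENNReal.ofNat_ne_top))
  have hx : ∀ i : ℕ, f i ∈ Edp := fun i => hf ▸ Set.mem_range_self i
  choose d hd1 hd2 hd3 using fun i => exists_small_arc h hh (hx i) (hbud i)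
  refine ⟨Set.range d, Set.countable_range d, ?_, ?_, ?_⟩
  · rintro _ ⟨i, rfl⟩; exact hd1 i
  · intro x hxE
    rw [hf] at hxE
    obtain ⟨i, rfl⟩ := hxE
    exact ⟨d i, Set.mem_range_self i, hd2 i⟩
  · have hsurj : Function.Surjective (Set.rangeFactorization d) :=
      Set.rangeFactorization_surjective
    calc cost h (Set.range d) ≤ ∑' i : ℕ, wgt h (d i) :=
          ENNReal.tsum_le_tsum_comp_of_surjective hsurj _
    _ ≤ ∑' i : ℕ, η * 2⁻¹ ^ (i+1) := ENNReal.tsum_le_tsum hd3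
    _ = η * (2⁻¹ * (1 - 2⁻¹)⁻¹) := by
        rw [ENNReal.tsum_mul_left, ENNReal.tsum_geometric_add_one]
    _ = η := by
        rw [ENNReal.one_sub_inv_two, inv_inv, ENNReal.inv_mul_cancel
          (by norm_num) (by norm_num), mul_one]

lemma chain_stabilize (C : ℕ → Set (Set ℂ))
    (hCd : ∀ n, ∀ d ∈ C n, IsDyadicArc d)
    (hgrow : ∀ n, ∀ d ∈ C n, ∃ q ∈ C (n+1), d ⊆ q)
    {x : ℂ} {m : ℕ} {d0 : Set ℂ} (hd0 : d0 ∈ C m) (hxd0 : x ∈ d0) :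
    ∃ q : Set ℂ, (∃ N, ∀ n ≥ N, q ∈ C n) ∧ x ∈ q := by
  let u : (k : ℕ) → {d : Set ℂ // d ∈ C (m + k) ∧ x ∈ d} := fun k =>
    Nat.rec (motive := fun k => {d : Set ℂ // d ∈ C (m + k) ∧ x ∈ d}) ⟨d0, hd0, hxd0⟩
      (fun k prev => ⟨(hgrow (m+k) prev.1 prev.2.1).choose,
        (hgrow (m+k) prev.1 prev.2.1).choose_spec.1,
        (hgrow (m+k) prev.1 prev.2.1).choose_spec.2 prev.2.2⟩) k
  have hstep : ∀ k, (u k : Set ℂ) ⊆ (u (k+1) : Set ℂ) := fun k =>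
    (hgrow (m+k) (u k).1 (u k).2.1).choose_spec.2
  have hmono : ∀ k k', k ≤ k' → (u k : Set ℂ) ⊆ (u k' : Set ℂ) := by
    intro k k'
    induction k' with
    | zero =>
      intro hkk'
      have hk0 : k = 0 := by omega
      subst hk0
      exact subset_rfl
    | succ k' ih =>
      intro hkk'
      rcases Nat.lt_or_ge k (k'+1) with hlt | hge
      · exact (ih (by omega)).trans (hstep k')
      · have hke : k = k' + 1 := by omega
        subst hke
        exact subset_rfl
  have main : ∀ G k, genOf ((u k : Set ℂ)) ≤ G →
      ∃ q : Set ℂ, (∃ N, ∀ n ≥ N, q ∈ C n) ∧ x ∈ q := by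
    intro G
    induction G with
    | zero =>
      intro k hk
      by_cases hconst : ∀ k' ≥ k, (u k' : Set ℂ) = (u k : Set ℂ)
      · refine ⟨(u k : Set ℂ), ⟨m + k, fun n hn => ?_⟩, (u k).2.2⟩
        have h1 : (u (n - m) : Set ℂ) = (u k : Set ℂ) := hconst (n - m) (by omega)
        have h2 := (u (n - m)).2.1
        rw [h1] at h2
        have h3 : m + (n - m) = n := by omega
        rwa [h3] at h2
      · push_neg at hconst
        obtain ⟨k', hk', hne⟩ := hconst
        have hlt := gen_lt_of_ssubset (hCd _ _ (u k).2.1) (hCd _ _ (u k').2.1)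
          (hmono k k' hk') (fun he => hne he.symm)
        omega
    | succ G ih =>
      intro k hk
      by_cases hconst : ∀ k' ≥ k, (u k' : Set ℂ) = (u k : Set ℂ)
      · refine ⟨(u k : Set ℂ), ⟨m + k, fun n hn => ?_⟩, (u k).2.2⟩
        have h1 : (u (n - m) : Set ℂ) = (u k : Set ℂ) := hconst (n - m) (by omega)
        have h2 := (u (n - m)).2.1
        rw [h1] at h2
        have h3 : m + (n - m) = n := by omega
        rwa [h3] at h2
      · push_neg at hconst
        obtain ⟨k', hk', hne⟩ := hconst
        have hlt := gen_lt_of_ssubset (hCd _ _ (u k).2.1) (hCd _ _ (u k').2.1)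
          (hmono k k' hk') (fun he => hne he.symm)
        exact ih k' (by omega)
  exact main (genOf ((u 0 : Set ℂ))) 0 le_rfl

end CostLayer

section KeyLemma

lemma key_le (h : ℝ → ℝ) (hh : IsMeasureFunction h) (A : ℕ → Set ℂ)
    (hA : ∀ n, A n ⊆ unitCircleSet) (hmono : Monotone A) :
    dyadicContent h (⋃ n, A n) ≤ ⨆ n, dyadicContent h (A n) := by
  refine ENNReal.le_of_forall_pos_le_add fun ε hε _ => ?_
  set t := ⨆ n, dyadicContent h (A n) with ht
  have hεnn : ((ε : ℝ≥0∞)) ≠ 0 := by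
    simpa using hε.ne'
  set η : ℕ → ℝ≥0∞ := fun n => (ε : ℝ≥0∞) * 2⁻¹ ^ (n+2) with hηdef
  have hηne : ∀ n, η n ≠ 0 := fun n =>
    mul_ne_zero hεnn (pow_ne_zero _ (ENNReal.inv_ne_zero.mpr ENNReal.ofNat_ne_top))
  have hgeo : ∀ N : ℕ, (∑ m ∈ Finset.range N, η m) ≤ (ε : ℝ≥0∞) * 2⁻¹ := by
    intro N
    calc (∑ m ∈ Finset.range N, η m) ≤ ∑' m : ℕ, η m := ENNReal.sum_le_tsum _
    _ = (ε : ℝ≥0∞) * ∑' m : ℕ, 2⁻¹ ^ (m+2) := ENNReal.tsum_mul_left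
    _ = (ε : ℝ≥0∞) * (2⁻¹ * (2⁻¹ * (1 - 2⁻¹)⁻¹)) := by
        congr 1
        calc ∑' m : ℕ, (2⁻¹ : ℝ≥0∞) ^ (m+2) = ∑' m : ℕ, 2⁻¹ * 2⁻¹ ^ (m+1) := by
              congr 1
              funext m
              rw [pow_succ, pow_succ]
              ring
        _ = 2⁻¹ * ∑' m : ℕ, (2⁻¹ : ℝ≥0∞) ^ (m+1) := ENNReal.tsum_mul_left
        _ = 2⁻¹ * (2⁻¹ * (1 - 2⁻¹)⁻¹) := by rw [ENNReal.tsum_geometric_add_one]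
    _ = (ε : ℝ≥0∞) * 2⁻¹ := by
        rw [ENNReal.one_sub_inv_two, inv_inv, ENNReal.inv_mul_cancel
          (by norm_num) (by norm_num), mul_one]
  -- choose covers
  have hLex : ∀ n, ∃ L : Set (Set ℂ), L.Countable ∧ (∀ d ∈ L, IsDyadicArc d) ∧
      A n ⊆ ⋃₀ L ∧ cost h L ≤ dyadicContent h (A n) + η n :=
    fun n => exists_cover h (hA n) (hηne n)
  choose L hLc hLd hLcov hLcost using hLex
  have hZex : ∀ n, ∃ Z : Set (Set ℂ), Z.Countable ∧ (∀ d ∈ Z, IsDyadicArc d) ∧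
      Edp ⊆ ⋃₀ Z ∧ cost h Z ≤ η n := fun n => exists_cheap_cover h hh (hηne n)
  choose Z hZc hZd hZcov hZcost using hZex
  -- the recursive sequence of covers
  set C : ℕ → Set (Set ℂ) := fun n =>
    Nat.rec (motive := fun _ => Set (Set ℂ)) (MaxOf (L 0))
      (fun n Cn => MaxOf (Cn ∪ L (n+1))) n with hCdef
  have hCs : ∀ n, C (n+1) = MaxOf (C n ∪ L (n+1)) := fun n => rfl
  have hCsubd : ∀ n, ∀ d ∈ C n, IsDyadicArc d := by
    intro n
    induction n with
    | zero => exact fun d hd => hLd 0 d (maxOf_subset hd)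
    | succ n ih =>
      intro d hd
      rcases maxOf_subset hd with hd' | hd'
      · exact ih d hd'
      · exact hLd (n+1) d hd'
  have hCc : ∀ n, (C n).Countable := by
    intro n
    induction n with
    | zero => exact (hLc 0).mono maxOf_subset
    | succ n ih => exact ((ih.union (hLc (n+1))).mono maxOf_subset)
  have hCcov : ∀ n, A n ⊆ ⋃₀ C n := by
    intro n
    cases n with
    | zero => exact (hLcov 0).trans (sUnion_le_maxOf (hLd 0))
    | succ n =>
      refine (hLcov (n+1)).trans ?_
      refine Set.Subset.trans ?_ (sUnion_le_maxOf ?_)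
      · exact Set.sUnion_mono Set.subset_union_right
      · rintro d (hd | hd)
        · exact hCsubd n d hd
        · exact hLd (n+1) d hd
  have hgrow : ∀ n, ∀ d ∈ C n, ∃ q ∈ C (n+1), d ⊆ q := by
    intro n d hd
    refine exists_maximal (T := C n ∪ L (n+1)) ?_ d (Or.inl hd)
    rintro d' (hd' | hd')
    · exact hCsubd n d' hd'
    · exact hLd (n+1) d' hd'
  have hMne : ∀ n, dyadicContent h (A n) ≠ ⊤ := fun n => dyadicContent_ne_top h (hA n)
  -- cost bound
  have hcost : ∀ n, cost h (C n) ≤ dyadicContent h (A n) + 2 * ∑ m ∈ Finset.range (n+1), η m := by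
    intro n
    induction n with
    | zero =>
      calc cost h (C 0) ≤ cost h (L 0) := cost_mono maxOf_subset
      _ ≤ dyadicContent h (A 0) + η 0 := hLcost 0
      _ ≤ _ := by
          rw [Finset.sum_range_one, two_mul]
          exact add_le_add_right le_self_add _
    | succ n ih =>
      have hmincov : A n ⊆ ⋃₀ (MinOf (C n) (L (n+1)) ∪ Z (n+1)) := by
        intro x hx
        by_cases hxE : x ∈ Edp
        · obtain ⟨z, hz, hxz⟩ := hZcov (n+1) hxE
          exact ⟨z, Or.inr hz, hxz⟩
        · have h1 : x ∈ ⋃₀ C n := hCcov n hx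
          have h2 : x ∈ ⋃₀ L (n+1) := hLcov (n+1) (hmono (Nat.le_succ n) hx)
          obtain ⟨w, hw, hxw⟩ := mem_minOf_cover (hCsubd n) (hLd (n+1)) h1 h2 hxE
          exact ⟨w, Or.inl hw, hxw⟩
      have hmin_le : dyadicContent h (A n) ≤ cost h (MinOf (C n) (L (n+1))) + η (n+1) := by
        have hccc : (MinOf (C n) (L (n+1)) ∪ Z (n+1)).Countable :=
          (((hCc n).union (hLc (n+1))).mono minOf_subset).union (hZc (n+1))
        have hddd : ∀ d ∈ MinOf (C n) (L (n+1)) ∪ Z (n+1), IsDyadicArc d := by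
          rintro d (hd | hd)
          · rcases minOf_subset hd with h' | h'
            · exact hCsubd n d h'
            · exact hLd (n+1) d h'
          · exact hZd (n+1) d hd
        calc dyadicContent h (A n) ≤ cost h (MinOf (C n) (L (n+1)) ∪ Z (n+1)) :=
              dyadicContent_le_cost h hccc hddd hmincov
        _ ≤ cost h (MinOf (C n) (L (n+1))) + cost h (Z (n+1)) := cost_union_le _ _ _
        _ ≤ cost h (MinOf (C n) (L (n+1))) + η (n+1) := add_le_add_right (hZcost (n+1)) _
      have hsurg := cost_surgery h (C n) (L (n+1))
      have hstep2 : cost h (C (n+1)) + dyadicContent h (A n)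
          ≤ (dyadicContent h (A (n+1)) + 2 * ∑ m ∈ Finset.range (n+2), η m)
            + dyadicContent h (A n) := by
        calc cost h (C (n+1)) + dyadicContent h (A n)
            ≤ cost h (C (n+1)) + (cost h (MinOf (C n) (L (n+1))) + η (n+1)) :=
              add_le_add_right hmin_le _
        _ = (cost h (MaxOf (C n ∪ L (n+1))) + cost h (MinOf (C n) (L (n+1)))) + η (n+1) := by
              rw [hCs n]; ring
        _ ≤ (cost h (C n) + cost h (L (n+1))) + η (n+1) := add_le_add_left hsurg _
        _ ≤ ((dyadicContent h (A n) + 2 * ∑ m ∈ Finset.range (n+1), η m)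
              + (dyadicContent h (A (n+1)) + η (n+1))) + η (n+1) :=
              add_le_add_left (add_le_add ih (hLcost (n+1))) _
        _ = (dyadicContent h (A (n+1)) + 2 * ∑ m ∈ Finset.range (n+2), η m)
              + dyadicContent h (A n) := by
              rw [Finset.sum_range_succ (f := η) (n := n+1)]
              ring
      exact (ENNReal.add_le_add_iff_right (hMne n)).mp hstep2
  -- the limit cover
  set Cinf : Set (Set ℂ) := {d | ∃ N, ∀ n ≥ N, d ∈ C n} with hCinfdef
  have hCinf_sub : Cinf ⊆ ⋃ n, C n := by
    rintro d ⟨N, hN⟩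
    exact Set.mem_iUnion.mpr ⟨N, hN N le_rfl⟩
  have hCinf_c : Cinf.Countable := (Set.countable_iUnion hCc).mono hCinf_sub
  have hCinf_d : ∀ d ∈ Cinf, IsDyadicArc d := by
    rintro d ⟨N, hN⟩
    exact hCsubd N d (hN N le_rfl)
  have hCinf_cov : (⋃ n, A n) ⊆ ⋃₀ Cinf := by
    intro x hx
    obtain ⟨m, hm⟩ := Set.mem_iUnion.mp hx
    obtain ⟨d0, hd0, hxd0⟩ := hCcov m hm
    obtain ⟨q, hqN, hxq⟩ := chain_stabilize C hCsubd hgrow hd0 hxd0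
    exact ⟨q, hqN, hxq⟩
  have hCinf_cost : cost h Cinf ≤ t + ε := by
    rw [cost_def, ENNReal.tsum_eq_iSup_sum]
    refine iSup_le fun F => ?_
    classical
    set NN : Set ℂ → ℕ := fun d => if hd : ∃ N, ∀ n ≥ N, d ∈ C n then hd.choose else 0 with hNNdef
    set M0 : ℕ := F.sup NN with hM0def
    have hsum : ∀ d ∈ F, Cinf.indicator (wgt h) d ≤ (C M0).indicator (wgt h) d := by
      intro d hdF
      by_cases hd : ∃ N, ∀ n ≥ N, d ∈ C n
      · have hNNle : NN d ≤ M0 := Finset.le_sup hdF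
        have hNNeq : NN d = hd.choose := by simp only [hNNdef]; rw [dif_pos hd]
        have hdC : d ∈ C M0 := hd.choose_spec M0 (by omega)
        rw [Set.indicator_of_mem (show d ∈ Cinf from hd), Set.indicator_of_mem hdC]
      · rw [Set.indicator_of_notMem (show d ∉ Cinf from hd)]
        exact zero_le
    calc ∑ d ∈ F, Cinf.indicator (wgt h) d ≤ ∑ d ∈ F, (C M0).indicator (wgt h) d :=
          Finset.sum_le_sum hsum
    _ ≤ ∑' d : Set ℂ, (C M0).indicator (wgt h) d := ENNReal.sum_le_tsum F
    _ = cost h (C M0) := (cost_def h _).symm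
    _ ≤ dyadicContent h (A M0) + 2 * ∑ m ∈ Finset.range (M0+1), η m := hcost M0
    _ ≤ t + 2 * ((ε : ℝ≥0∞) * 2⁻¹) := by
        refine add_le_add (le_iSup (fun n => dyadicContent h (A n)) M0) ?_
        exact mul_le_mul_right (hgeo (M0+1)) 2
    _ = t + ε := by
        congr 1
        rw [mul_comm ((ε : ℝ≥0∞)) _, ← mul_assoc, ENNReal.mul_inv_cancel
          (by norm_num) (by norm_num), one_mul]
  calc dyadicContent h (⋃ n, A n) ≤ cost h Cinf :=
        dyadicContent_le_cost h hCinf_c hCinf_d hCinf_cov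
  _ ≤ t + ε := hCinf_cost

end KeyLemma

/-- For any measure function `h`, the dyadic Hausdorff content `M_{h,d}`
is continuous along increasing unions: if `A n` is an increasing sequence of subsets of
the circle with union `A`, then `M_{h,d}(A) = lim_n M_{h,d}(A n)`. -/
theorem tendsto_dyadicContent_of_monotone
    (h : ℝ → ℝ) (hh : IsMeasureFunction h) (A : ℕ → Set ℂ)
    (hA : ∀ n, A n ⊆ unitCircleSet) (hmono : Monotone A) :
    Filter.Tendsto (fun n => dyadicContent h (A n)) Filter.atTop
      (nhds (dyadicContent h (⋃ n, A n))) := by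
  have hmonoM : Monotone fun n => dyadicContent h (A n) :=
    fun a b hab => dyadicContent_mono h (hmono hab)
  have heq : (⨆ n, dyadicContent h (A n)) = dyadicContent h (⋃ n, A n) :=
    le_antisymm (iSup_le fun n => dyadicContent_mono h (Set.subset_iUnion A n))
      (key_le h hh A hA hmono)
  rw [← heq]
  exact tendsto_atTop_iSup hmonoM
end
end

section
/- If A and B are h-Carleson subsets of 𝕋 (for the same measure function h), then their union A ∪ B is an h-Carleson set. -/
open MeasureTheory Set Filter Topology
open scoped ENNReal

noncomputable section

lemma cm_eq_iff {s t : ℝ} :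
    circleMap 0 1 s = circleMap 0 1 t ↔ ∃ k : ℤ, s = t + k * (2 * Real.pi) := by
  have h1 : circleMap 0 1 s = Complex.exp (s * Complex.I) := by simp [circleMap]
  have h2 : circleMap 0 1 t = Complex.exp (t * Complex.I) := by simp [circleMap]
  rw [h1, h2, Complex.exp_eq_exp_iff_exists_int]
  constructor
  · rintro ⟨n, hn⟩
    refine ⟨n, ?_⟩
    have h3 : ((s : ℂ) - (t + n * (2 * Real.pi))) * Complex.I = 0 := by
      linear_combination hn
    rcases mul_eq_zero.1 h3 with h4 | h4
    · have h5 : (s : ℂ) = ((t + n * (2 * Real.pi) : ℝ) : ℂ) := by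
        push_cast; linear_combination h4
      exact_mod_cast h5
    · exact absurd h4 Complex.I_ne_zero
  · rintro ⟨n, hn⟩
    exact ⟨n, by push_cast [hn]; ring⟩

lemma cm_shift (a : ℝ) (k : ℤ) : circleMap 0 1 (a + k * (2 * Real.pi)) = circleMap 0 1 a :=
  (periodic_circleMap 0 1).int_mul k a

lemma arc_shift (a b : ℝ) (k : ℤ) :
    circleMap 0 1 '' Set.Ioo (a + k * (2 * Real.pi)) (b + k * (2 * Real.pi))
      = circleMap 0 1 '' Set.Ioo a b := by
  ext z
  constructor
  · rintro ⟨t, ht, rfl⟩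
    refine ⟨t + ((-k : ℤ) : ℝ) * (2 * Real.pi),
      ⟨?_, ?_⟩, cm_shift t (-k)⟩
    · have := ht.1; push_cast; linarith
    · have := ht.2; push_cast; linarith
  · rintro ⟨t, ht, rfl⟩
    exact ⟨t + k * (2 * Real.pi), ⟨by linarith [ht.1], by linarith [ht.2]⟩, cm_shift t k⟩

lemma preimage_arc (a b : ℝ) :
    circleMap 0 1 ⁻¹' (circleMap 0 1 '' Set.Ioo a b)
      = ⋃ k : ℤ, Set.Ioo (a + k * (2 * Real.pi)) (b + k * (2 * Real.pi)) := by
  ext x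
  simp only [Set.mem_preimage, Set.mem_image, Set.mem_iUnion, Set.mem_Ioo]
  constructor
  · rintro ⟨s, hs, he⟩
    obtain ⟨k, hk⟩ := cm_eq_iff.1 he
    rw [hk] at hs
    exact ⟨-k, by push_cast; linarith [hs.1], by push_cast; linarith [hs.2]⟩
  · rintro ⟨k, h1, h2⟩
    refine ⟨x - k * (2 * Real.pi), ⟨by linarith, by linarith⟩, ?_⟩
    rw [cm_eq_iff]
    exact ⟨-k, by push_cast; ring⟩

/-- Key geometric lemma: an arc disjoint from `B` which meets an arc whose endpoints
lie in `B` is contained in that arc. -/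
lemma arc_subset_of_endpoints_mem {c1 d1 c2 d2 : ℝ} {B : Set ℂ}
    (hdisj : circleMap 0 1 '' Set.Ioo c1 d1 ∩ B = ∅)
    (hc2 : circleMap 0 1 c2 ∈ B) (hd2 : circleMap 0 1 d2 ∈ B)
    (hmeet : (circleMap 0 1 '' Set.Ioo c1 d1 ∩ circleMap 0 1 '' Set.Ioo c2 d2).Nonempty) :
    circleMap 0 1 '' Set.Ioo c1 d1 ⊆ circleMap 0 1 '' Set.Ioo c2 d2 := by
  obtain ⟨x, hx1, hx2⟩ := hmeet
  obtain ⟨s, hs, hse⟩ := hx1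
  obtain ⟨t, ht, hte⟩ := hx2
  obtain ⟨k, hk⟩ := cm_eq_iff.1 (hse.trans hte.symm)
  -- J1 = cm '' Ioo (c1 - k 2π) (d1 - k 2π), and t = s - k 2π lies in both intervals
  set c1' := c1 + (-k : ℤ) * (2 * Real.pi) with hc1'
  set d1' := d1 + (-k : ℤ) * (2 * Real.pi) with hd1'
  have hJ1 : circleMap 0 1 '' Set.Ioo c1 d1 = circleMap 0 1 '' Set.Ioo c1' d1' :=
    (arc_shift c1 d1 (-k)).symm
  have hnotB : ∀ y ∈ circleMap 0 1 '' Set.Ioo c1' d1', y ∉ B := by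
    intro y hy hyB
    rw [← hJ1] at hy
    exact absurd (Set.mem_inter hy hyB) (by rw [hdisj]; exact Set.notMem_empty y)
  have htmem : t ∈ Set.Ioo c1' d1' := by
    constructor
    · have := hs.1; simp only [hc1']; push_cast; linarith
    · have := hs.2; simp only [hd1']; push_cast; linarith
  have hcle : c2 ≤ c1' := by
    by_contra hlt
    push_neg at hlt
    exact hnotB _ ⟨c2, ⟨hlt, lt_trans ht.1 htmem.2⟩, rfl⟩ hc2
  have hdle : d1' ≤ d2 := by
    by_contra hlt
    push_neg at hlt
    exact hnotB _ ⟨d2, ⟨lt_trans htmem.1 ht.2, hlt⟩, rfl⟩ hd2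
  rw [hJ1]
  exact Set.image_mono (Set.Ioo_subset_Ioo hcle hdle)


lemma eq_Ioo_of_isOpen_preconnected {S : Set ℝ} (hS : IsOpen S) (hc : IsPreconnected S)
    (hne : S.Nonempty) (hbdd : BddBelow S) (hbda : BddAbove S) :
    S = Set.Ioo (sInf S) (sSup S) := by
  apply Set.Subset.antisymm
  · intro x hx
    constructor
    · rcases lt_or_eq_of_le (csInf_le hbdd hx) with h | h
      · exact h
      · exfalso
        obtain ⟨ε, hε, hball⟩ := Metric.isOpen_iff.1 hS x hx
        have : x - ε / 2 ∈ S := by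
          apply hball
          rw [Metric.mem_ball, Real.dist_eq, abs_lt]
          constructor <;> linarith
        have := csInf_le hbdd this
        rw [← h] at this
        linarith
    · rcases lt_or_eq_of_le (le_csSup hbda hx) with h | h
      · exact h
      · exfalso
        obtain ⟨ε, hε, hball⟩ := Metric.isOpen_iff.1 hS x hx
        have : x + ε / 2 ∈ S := by
          apply hball
          rw [Metric.mem_ball, Real.dist_eq, abs_lt]
          constructor <;> linarith
        have := le_csSup hbda this
        rw [h] at this
        linarith
  · intro x hx
    obtain ⟨u, hu, hux⟩ := exists_lt_of_csInf_lt hne hx.1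
    obtain ⟨v, hv, hxv⟩ := exists_lt_of_lt_csSup hne hx.2
    exact hc.ordConnected.out hu hv ⟨le_of_lt hux, le_of_lt hxv⟩

/-- Structure of a connected component of an open subset of an interval. -/
lemma comp_struct {V : Set ℝ} (hV : IsOpen V) {a b t : ℝ} (hVsub : V ⊆ Set.Ioo a b)
    (ht : t ∈ V) :
    a ≤ sInf (connectedComponentIn V t) ∧
    sInf (connectedComponentIn V t) < sSup (connectedComponentIn V t) ∧
    sSup (connectedComponentIn V t) ≤ b ∧
    connectedComponentIn V t
      = Set.Ioo (sInf (connectedComponentIn V t)) (sSup (connectedComponentIn V t)) ∧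
    sInf (connectedComponentIn V t) ∉ V ∧ sSup (connectedComponentIn V t) ∉ V := by
  set K := connectedComponentIn V t with hK
  have hKne : K.Nonempty := ⟨t, mem_connectedComponentIn ht⟩
  have hKsub : K ⊆ V := connectedComponentIn_subset V t
  have hKsub' : K ⊆ Set.Ioo a b := hKsub.trans hVsub
  have hKopen : IsOpen K := hV.connectedComponentIn
  have hKconn : IsPreconnected K := isPreconnected_connectedComponentIn
  have hbdd : BddBelow K := ⟨a, fun x hx => le_of_lt (hKsub' hx).1⟩
  have hbda : BddAbove K := ⟨b, fun x hx => le_of_lt (hKsub' hx).2⟩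
  have hrep : K = Set.Ioo (sInf K) (sSup K) :=
    eq_Ioo_of_isOpen_preconnected hKopen hKconn hKne hbdd hbda
  have htK : t ∈ K := mem_connectedComponentIn ht
  have hlt : sInf K < sSup K := by
    have := hrep ▸ htK; exact lt_trans this.1 this.2
  have hendL : sInf K ∉ V := by
    intro hmem
    obtain ⟨ε, hε, hball⟩ := Metric.isOpen_iff.1 hV _ hmem
    set c := sInf K
    set ε' := min ε (sSup K - c) with hε'
    have hε'pos : 0 < ε' := lt_min hε (by linarith)
    have hsub : Set.Ioo (c - ε') (sSup K) ⊆ V := by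
      intro x hx
      rcases lt_or_ge x (c + ε') with h | h
      · apply hball
        rw [Metric.mem_ball, Real.dist_eq, abs_lt]
        have h1 : ε' ≤ ε := min_le_left _ _
        constructor <;> [linarith [hx.1]; linarith]
      · have : x ∈ Set.Ioo c (sSup K) := ⟨by linarith, hx.2⟩
        exact hKsub (hrep ▸ this)
    have hsub2 : Set.Ioo (c - ε') (sSup K) ⊆ K := by
      apply IsPreconnected.subset_connectedComponentIn isPreconnected_Ioo _ hsub
      rw [hrep] at htK
      exact ⟨by linarith [htK.1], htK.2⟩
    have : c - ε' / 2 ∈ K := hsub2 ⟨by linarith, by linarith⟩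
    have := (hrep ▸ this).1
    linarith
  have hendR : sSup K ∉ V := by
    intro hmem
    obtain ⟨ε, hε, hball⟩ := Metric.isOpen_iff.1 hV _ hmem
    set d := sSup K
    set ε' := min ε (d - sInf K) with hε'
    have hε'pos : 0 < ε' := lt_min hε (by linarith)
    have hsub : Set.Ioo (sInf K) (d + ε') ⊆ V := by
      intro x hx
      rcases lt_or_ge (d - ε') x with h | h
      · apply hball
        rw [Metric.mem_ball, Real.dist_eq, abs_lt]
        have h1 : ε' ≤ ε := min_le_left _ _
        constructor <;> [linarith; linarith [hx.2]]
      · have : x ∈ Set.Ioo (sInf K) d := ⟨hx.1, by linarith⟩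
        exact hKsub (hrep ▸ this)
    have hsub2 : Set.Ioo (sInf K) (d + ε') ⊆ K := by
      apply IsPreconnected.subset_connectedComponentIn isPreconnected_Ioo _ hsub
      rw [hrep] at htK
      exact ⟨htK.1, by linarith [htK.2]⟩
    have : d + ε' / 2 ∈ K := hsub2 ⟨by linarith, by linarith⟩
    have := (hrep ▸ this).2
    linarith
  have ha : a ≤ sInf K := le_csInf hKne fun x hx => le_of_lt (hKsub' hx).1
  have hb : sSup K ≤ b := csSup_le hKne fun x hx => le_of_lt (hKsub' hx).2
  exact ⟨ha, hlt, hb, hrep, hendL, hendR⟩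

lemma mC_ne_top (s : Set ℂ) : mC s ≠ ⊤ := by
  have huniv : mC Set.univ = (ENNReal.ofReal (2 * Real.pi))⁻¹ * ENNReal.ofReal (2 * Real.pi) := by
    rw [mC, Measure.smul_apply, smul_eq_mul,
      Measure.map_apply (continuous_circleMap 0 1).measurable MeasurableSet.univ,
      Set.preimage_univ, Measure.restrict_apply_univ, Real.volume_Ioc]
    norm_num
  have h1 : mC s ≤ mC Set.univ := measure_mono (Set.subset_univ s)
  intro htop
  rw [htop] at h1
  have h2 : mC Set.univ ≠ ⊤ := by
    rw [huniv]
    exact ENNReal.mul_ne_top (ENNReal.inv_ne_top.2 (by positivity)) ENNReal.ofReal_ne_top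
  exact h2 (top_le_iff.1 h1)

lemma h_nonneg {h : ℝ → ℝ} (hh : IsMeasureFunction h) {x : ℝ} (hx : 0 ≤ x) : 0 ≤ h x := by
  rw [← hh.map_zero]
  exact hh.monotoneOn (le_refl (0:ℝ)) hx hx

lemma h_subadd {h : ℝ → ℝ} (hh : IsMeasureFunction h) {ι : Type*} (μp : ℝ≥0∞)
    (μl : ι → ℝ≥0∞) (hp : μp ≠ ⊤) (hle : ∀ i, μl i ≤ μp) (hcov : μp ≤ ∑' i, μl i) :
    ENNReal.ofReal (h μp.toReal) ≤ ∑' i, ENNReal.ofReal (h (μl i).toReal) := by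
  rcases eq_or_ne μp 0 with h0 | h0
  · simp [h0, hh.map_zero]
  set x := μp.toReal with hx
  have hxpos : 0 < x := ENNReal.toReal_pos h0 hp
  have hsplit : ENNReal.ofReal (h x) = ENNReal.ofReal (h x / x) * ENNReal.ofReal x := by
    rw [← ENNReal.ofReal_mul (div_nonneg (h_nonneg hh hxpos.le) hxpos.le)]
    rw [div_mul_cancel₀ _ (ne_of_gt hxpos)]
  have hofx : ENNReal.ofReal x = μp := ENNReal.ofReal_toReal hp
  calc ENNReal.ofReal (h x) = ENNReal.ofReal (h x / x) * μp := by rw [hsplit, hofx]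
    _ ≤ ENNReal.ofReal (h x / x) * ∑' i, μl i := by
        exact mul_le_mul_right hcov _
    _ = ∑' i, ENNReal.ofReal (h x / x) * μl i := ENNReal.tsum_mul_left.symm
    _ ≤ ∑' i, ENNReal.ofReal (h (μl i).toReal) := by
        apply ENNReal.tsum_le_tsum
        intro i
        rcases eq_or_ne (μl i) 0 with hi0 | hi0
        · simp [hi0]
        · have hitop : μl i ≠ ⊤ := ne_top_of_le_ne_top hp (hle i)
          set y := (μl i).toReal with hy
          have hypos : 0 < y := ENNReal.toReal_pos hi0 hitop
          have hyx : y ≤ x := ENNReal.toReal_mono hp (hle i)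
          have hanti : h x / x ≤ h y / y := hh.antitoneOn hypos hxpos hyx
          calc ENNReal.ofReal (h x / x) * μl i ≤ ENNReal.ofReal (h y / y) * μl i :=
                mul_le_mul_left (ENNReal.ofReal_le_ofReal hanti) _
            _ = ENNReal.ofReal (h y / y) * ENNReal.ofReal y := by rw [ENNReal.ofReal_toReal hitop]
            _ = ENNReal.ofReal (h y / y * y) := by
                rw [ENNReal.ofReal_mul (div_nonneg (h_nonneg hh hypos.le) hypos.le)]
            _ = ENNReal.ofReal (h y) := by rw [div_mul_cancel₀ _ (ne_of_gt hypos)]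

/-- The union of two `h`-Carleson sets is an `h`-Carleson set. -/
theorem IsHCarleson.union
    (h : ℝ → ℝ) (hh : IsMeasureFunction h) (A B : Set ℂ)
    (hA : IsHCarleson h A) (hB : IsHCarleson h B) :
    IsHCarleson h (A ∪ B) := by
  obtain ⟨hAsub, hAcl, LA, hLAc, hLAarc, hLAeq, hLAsum⟩ := hA
  obtain ⟨hBsub, hBcl, LB, hLBc, hLBarc, hLBeq, hLBsum⟩ := hB
  refine ⟨Set.union_subset hAsub hBsub, hAcl.union hBcl, ?_⟩
  choose! aa bb hab hlen harc using hLAarc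
  set UB : Set ℂ := ⋃₀ LB with hUB
  have hUBopen : IsOpen (circleMap 0 1 ⁻¹' UB) := by
    rw [hUB, Set.sUnion_eq_biUnion, Set.preimage_iUnion₂]
    apply isOpen_biUnion
    intro l hl
    obtain ⟨a', b', _, _, rfl⟩ := hLBarc l hl
    rw [preimage_arc]
    exact isOpen_iUnion fun k => isOpen_Ioo
  set V : Set ℂ → Set ℝ := fun l => Set.Ioo (aa l) (bb l) ∩ circleMap 0 1 ⁻¹' UB with hV
  have hVopen : ∀ l, IsOpen (V l) := fun l => isOpen_Ioo.inter hUBopen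
  have hVsub : ∀ l, V l ⊆ Set.Ioo (aa l) (bb l) := fun l => Set.inter_subset_left
  set piece : Set ℂ → ℝ → Set ℂ :=
    fun l t => circleMap 0 1 '' connectedComponentIn (V l) t with hpiece
  set LC : Set (Set ℂ) := ⋃ l ∈ LA, piece l '' V l with hLC
  have hpieceSubL : ∀ l ∈ LA, ∀ t ∈ V l, piece l t ⊆ l := by
    intro l hl t ht
    calc piece l t ⊆ circleMap 0 1 '' Set.Ioo (aa l) (bb l) :=
          Set.image_mono ((connectedComponentIn_subset _ _).trans (hVsub l))
      _ = l := (harc l hl).symm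
  have hpieceSubUB : ∀ (l : Set ℂ), ∀ t ∈ V l, piece l t ⊆ UB := by
    intro l t ht x hx
    obtain ⟨s, hs, rfl⟩ := hx
    exact ((connectedComponentIn_subset _ _) hs).2
  have hpieceArc : ∀ l ∈ LA, ∀ t ∈ V l, IsOpenArc (piece l t) := by
    intro l hl t ht
    obtain ⟨hac, hlt, hdb, hrep, _, _⟩ := comp_struct (hVopen l) (hVsub l) ht
    refine ⟨sInf (connectedComponentIn (V l) t), sSup (connectedComponentIn (V l) t),
      hlt, ?_, congrArg (Set.image (circleMap 0 1)) hrep⟩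
    have := hlen l hl
    linarith
  -- countability
  have hLCc : LC.Countable := by
    apply Set.Countable.biUnion hLAc
    intro l hl
    have hsub : piece l '' V l ⊆ piece l '' (V l ∩ Set.range (Rat.cast : ℚ → ℝ)) := by
      rintro p ⟨t, ht, rfl⟩
      obtain ⟨_, hlt, _, hrep, _, _⟩ := comp_struct (hVopen l) (hVsub l) ht
      obtain ⟨q, hq1, hq2⟩ := exists_rat_btwn hlt
      have hqK : (q : ℝ) ∈ connectedComponentIn (V l) t := by rw [hrep]; exact ⟨hq1, hq2⟩
      refine ⟨q, ⟨connectedComponentIn_subset _ _ hqK, ⟨q, rfl⟩⟩, ?_⟩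
      simp only [hpiece]
      rw [← connectedComponentIn_eq hqK]
    exact Set.Countable.mono hsub
      (((Set.countable_range _).mono Set.inter_subset_right).image _)
  -- arcs
  have hLCarc : ∀ p ∈ LC, IsOpenArc p := by
    intro p hp
    simp only [hLC, Set.mem_iUnion, Set.mem_image] at hp
    obtain ⟨l, hl, t, ht, rfl⟩ := hp
    exact hpieceArc l hl t ht
  -- coverage
  have hcover : unitCircleSet \ (A ∪ B) = ⋃₀ LC := by
    apply Set.Subset.antisymm
    · intro x hx
      have hxA : x ∈ unitCircleSet \ A := ⟨hx.1, fun hxa => hx.2 (Or.inl hxa)⟩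
      have hxB : x ∈ unitCircleSet \ B := ⟨hx.1, fun hxb => hx.2 (Or.inr hxb)⟩
      rw [hLAeq] at hxA
      obtain ⟨l, hl, hxl⟩ := hxA
      rw [harc l hl] at hxl
      obtain ⟨t, ht, rfl⟩ := hxl
      have htV : t ∈ V l := by
        refine ⟨ht, ?_⟩
        rw [Set.mem_preimage, ← hLBeq]
        exact hxB
      refine ⟨piece l t, ?_, ?_⟩
      · simp only [hLC, Set.mem_iUnion, Set.mem_image]
        exact ⟨l, hl, t, htV, rfl⟩
      · exact ⟨t, mem_connectedComponentIn htV, rfl⟩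
    · intro x hx
      obtain ⟨p, hp, hxp⟩ := hx
      simp only [hLC, Set.mem_iUnion, Set.mem_image] at hp
      obtain ⟨l, hl, t, ht, rfl⟩ := hp
      have h1 := hpieceSubL l hl t ht hxp
      have h2 := hpieceSubUB l t ht hxp
      have hA' : x ∈ unitCircleSet \ A := by
        rw [hLAeq]
        exact ⟨l, hl, h1⟩
      have hB' : x ∈ unitCircleSet \ B := by
        rw [hLBeq]
        exact h2
      exact ⟨hA'.1, fun hc => hc.elim hA'.2 hB'.2⟩
  -- the summand
  set F : Set ℂ → ℝ≥0∞ := fun p => ENNReal.ofReal (h (mC p).toReal) with hFdef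
  have hFmono : ∀ {p q : Set ℂ}, p ⊆ q → F p ≤ F q := by
    intro p q hpq
    apply ENNReal.ofReal_le_ofReal
    exact hh.monotoneOn ENNReal.toReal_nonneg ENNReal.toReal_nonneg
      (ENNReal.toReal_mono (mC_ne_top q) (measure_mono hpq))
  -- classification
  set LEl : Set (Set ℂ) := {p | ∃ l ∈ LA, ∃ t ∈ V l,
    p = piece l t ∧ sInf (connectedComponentIn (V l) t) = aa l} with hLEl
  set LEr : Set (Set ℂ) := {p | ∃ l ∈ LA, ∃ t ∈ V l,
    p = piece l t ∧ sSup (connectedComponentIn (V l) t) = bb l} with hLEr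
  set LI : Set (Set ℂ) := {p | ∃ l ∈ LA, ∃ t ∈ V l,
    p = piece l t ∧ aa l < sInf (connectedComponentIn (V l) t) ∧
      sSup (connectedComponentIn (V l) t) < bb l} with hLIdef
  have hsplit : LC ⊆ LEl ∪ LEr ∪ LI := by
    intro p hp
    simp only [hLC, Set.mem_iUnion, Set.mem_image] at hp
    obtain ⟨l, hl, t, ht, rfl⟩ := hp
    obtain ⟨hac, hlt, hdb, hrep, hnc, hnd⟩ := comp_struct (hVopen l) (hVsub l) ht
    rcases eq_or_lt_of_le hac with hc | hc
    · exact Or.inl (Or.inl ⟨l, hl, t, ht, rfl, hc.symm⟩)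
    rcases eq_or_lt_of_le hdb with hd | hd
    · exact Or.inl (Or.inr ⟨l, hl, t, ht, rfl, hd⟩)
    exact Or.inr ⟨l, hl, t, ht, rfl, hc, hd⟩
  -- edge sums
  have hEl : (∑' p : LEl, F ↑p) ≤ ∑' l : LA, F ↑l := by
    have hmem : ∀ p : LEl, ∃ l, ∃ _ : l ∈ LA, ∃ t, t ∈ V l ∧ (p : Set ℂ) = piece l t ∧
        sInf (connectedComponentIn (V l) t) = aa l := by
      intro p
      obtain ⟨l, hl, t, ht, he, hc⟩ := p.2
      exact ⟨l, hl, t, ht, he, hc⟩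
    choose lf hlf tf htf hef hcf using hmem
    have hinj : Function.Injective (fun p : LEl => (⟨lf p, hlf p⟩ : LA)) := by
      intro p1 p2 hpe
      have hll : lf p1 = lf p2 := congrArg Subtype.val hpe
      have htf2 : tf p2 ∈ V (lf p1) := hll ▸ htf p2
      have hef2 : (p2 : Set ℂ) = piece (lf p1) (tf p2) := by rw [hef p2, hll]
      have hcf2 : sInf (connectedComponentIn (V (lf p1)) (tf p2)) = aa (lf p1) := by
        rw [hll]; exact hcf p2
      obtain ⟨_, hlt1, _, hrep1, _, _⟩ := comp_struct (hVopen (lf p1)) (hVsub (lf p1)) (htf p1)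
      obtain ⟨_, hlt2, _, hrep2, _, _⟩ := comp_struct (hVopen (lf p1)) (hVsub (lf p1)) htf2
      rw [hcf p1] at hrep1 hlt1
      rw [hcf2] at hrep2 hlt2
      set d1 := sSup (connectedComponentIn (V (lf p1)) (tf p1))
      set d2 := sSup (connectedComponentIn (V (lf p1)) (tf p2))
      set x := (aa (lf p1) + min d1 d2) / 2 with hx
      have hx1 : x ∈ connectedComponentIn (V (lf p1)) (tf p1) := by
        rw [hrep1]
        constructor
        · simp only [hx]; rcases le_total d1 d2 with hle | hle <;> simp [min_eq_left, min_eq_right, hle] <;> linarith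
        · simp only [hx]; rcases le_total d1 d2 with hle | hle <;> simp [min_eq_left, min_eq_right, hle] <;> linarith
      have hx2 : x ∈ connectedComponentIn (V (lf p1)) (tf p2) := by
        rw [hrep2]
        constructor
        · simp only [hx]; rcases le_total d1 d2 with hle | hle <;> simp [min_eq_left, min_eq_right, hle] <;> linarith
        · simp only [hx]; rcases le_total d1 d2 with hle | hle <;> simp [min_eq_left, min_eq_right, hle] <;> linarith
      have hKK : connectedComponentIn (V (lf p1)) (tf p1)
          = connectedComponentIn (V (lf p1)) (tf p2) := by
        rw [connectedComponentIn_eq hx1, connectedComponentIn_eq hx2]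
      apply Subtype.ext
      rw [hef p1, hef2]
      exact congrArg (Set.image (circleMap 0 1)) hKK
    calc (∑' p : LEl, F ↑p) ≤ ∑' p : LEl, F ↑((fun p : LEl => (⟨lf p, hlf p⟩ : LA)) p) := by
          apply ENNReal.tsum_le_tsum
          intro p
          apply hFmono
          rw [hef p]
          exact hpieceSubL _ (hlf p) _ (htf p)
      _ ≤ ∑' l : LA, F ↑l :=
          ENNReal.tsum_comp_le_tsum_of_injective hinj (fun l : LA => F ↑l)
  have hEr : (∑' p : LEr, F ↑p) ≤ ∑' l : LA, F ↑l := by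
    have hmem : ∀ p : LEr, ∃ l, ∃ _ : l ∈ LA, ∃ t, t ∈ V l ∧ (p : Set ℂ) = piece l t ∧
        sSup (connectedComponentIn (V l) t) = bb l := by
      intro p
      obtain ⟨l, hl, t, ht, he, hc⟩ := p.2
      exact ⟨l, hl, t, ht, he, hc⟩
    choose lf hlf tf htf hef hcf using hmem
    have hinj : Function.Injective (fun p : LEr => (⟨lf p, hlf p⟩ : LA)) := by
      intro p1 p2 hpe
      have hll : lf p1 = lf p2 := congrArg Subtype.val hpe
      have htf2 : tf p2 ∈ V (lf p1) := hll ▸ htf p2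
      have hef2 : (p2 : Set ℂ) = piece (lf p1) (tf p2) := by rw [hef p2, hll]
      have hcf2 : sSup (connectedComponentIn (V (lf p1)) (tf p2)) = bb (lf p1) := by
        rw [hll]; exact hcf p2
      obtain ⟨_, hlt1, _, hrep1, _, _⟩ := comp_struct (hVopen (lf p1)) (hVsub (lf p1)) (htf p1)
      obtain ⟨_, hlt2, _, hrep2, _, _⟩ := comp_struct (hVopen (lf p1)) (hVsub (lf p1)) htf2
      rw [hcf p1] at hrep1 hlt1
      rw [hcf2] at hrep2 hlt2
      set c1 := sInf (connectedComponentIn (V (lf p1)) (tf p1))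
      set c2 := sInf (connectedComponentIn (V (lf p1)) (tf p2))
      set x := (max c1 c2 + bb (lf p1)) / 2 with hx
      have hx1 : x ∈ connectedComponentIn (V (lf p1)) (tf p1) := by
        rw [hrep1]
        constructor
        · simp only [hx]; rcases le_total c1 c2 with hle | hle <;> simp [max_eq_left, max_eq_right, hle] <;> linarith
        · simp only [hx]; rcases le_total c1 c2 with hle | hle <;> simp [max_eq_left, max_eq_right, hle] <;> linarith
      have hx2 : x ∈ connectedComponentIn (V (lf p1)) (tf p2) := by
        rw [hrep2]
        constructor
        · simp only [hx]; rcases le_total c1 c2 with hle | hle <;> simp [max_eq_left, max_eq_right, hle] <;> linarith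
        · simp only [hx]; rcases le_total c1 c2 with hle | hle <;> simp [max_eq_left, max_eq_right, hle] <;> linarith
      have hKK : connectedComponentIn (V (lf p1)) (tf p1)
          = connectedComponentIn (V (lf p1)) (tf p2) := by
        rw [connectedComponentIn_eq hx1, connectedComponentIn_eq hx2]
      apply Subtype.ext
      rw [hef p1, hef2]
      exact congrArg (Set.image (circleMap 0 1)) hKK
    calc (∑' p : LEr, F ↑p) ≤ ∑' p : LEr, F ↑((fun p : LEr => (⟨lf p, hlf p⟩ : LA)) p) := by
          apply ENNReal.tsum_le_tsum
          intro p
          apply hFmono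
          rw [hef p]
          exact hpieceSubL _ (hlf p) _ (htf p)
      _ ≤ ∑' l : LA, F ↑l :=
          ENNReal.tsum_comp_le_tsum_of_injective hinj (fun l : LA => F ↑l)
  -- interior pieces
  have hLBnotB : ∀ l' ∈ LB, ∀ x ∈ l', x ∉ B := by
    intro l' hl' x hx hxB
    have : x ∈ UB := ⟨l', hl', hx⟩
    rw [← hLBeq] at this
    exact this.2 hxB
  have hLIprop : ∀ p : LI, ∃ c d : ℝ, c < d ∧ (p : Set ℂ) = circleMap 0 1 '' Set.Ioo c d ∧
      circleMap 0 1 c ∈ B ∧ circleMap 0 1 d ∈ B ∧ (p : Set ℂ) ⊆ UB := by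
    intro p
    obtain ⟨l, hl, t, ht, hpe, hc, hd⟩ := p.2
    obtain ⟨hac, hlt, hdb, hrep, hnc, hnd⟩ := comp_struct (hVopen l) (hVsub l) ht
    have hBpt : ∀ s, s ∈ Set.Ioo (aa l) (bb l) → s ∉ V l → circleMap 0 1 s ∈ B := by
      intro s hs hsv
      by_contra hnb
      apply hsv
      refine ⟨hs, ?_⟩
      rw [Set.mem_preimage, ← hLBeq]
      exact ⟨circleMap_mem_sphere 0 zero_le_one s, hnb⟩
    refine ⟨sInf (connectedComponentIn (V l) t), sSup (connectedComponentIn (V l) t), hlt,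
      by rw [hpe]; exact congrArg (Set.image (circleMap 0 1)) hrep, ?_, ?_, ?_⟩
    · exact hBpt _ ⟨hc, lt_of_lt_of_le hlt hdb⟩ hnc
    · exact hBpt _ ⟨lt_trans hc hlt, hd⟩ hnd
    · rw [hpe]
      exact hpieceSubUB l t ht
  choose cI dI hIlt hIrep hIc hId hIsubUB using hLIprop
  have hInotB : ∀ (p : LI), (p : Set ℂ) ∩ B = ∅ := by
    intro p
    rw [Set.eq_empty_iff_forall_notMem]
    rintro x ⟨hx1, hx2⟩
    have := hIsubUB p hx1
    rw [← hLBeq] at this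
    exact this.2 hx2
  have hIdisj : ∀ p q : LI, ¬((p : Set ℂ) = (q : Set ℂ)) → ((p : Set ℂ) ∩ (q : Set ℂ)) = ∅ := by
    intro p q hne
    by_contra hcon
    have hne' : ((p : Set ℂ) ∩ (q : Set ℂ)).Nonempty := Set.nonempty_iff_ne_empty.2 hcon
    have h1 : (p : Set ℂ) ⊆ (q : Set ℂ) := by
      rw [hIrep p, hIrep q]
      refine arc_subset_of_endpoints_mem ?_ (hIc q) (hId q) ?_
      · rw [← hIrep p]; exact hInotB p
      · rw [← hIrep p, ← hIrep q]; exact hne'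
    have h2 : (q : Set ℂ) ⊆ (p : Set ℂ) := by
      rw [hIrep p, hIrep q]
      refine arc_subset_of_endpoints_mem ?_ (hIc p) (hId p) ?_
      · rw [← hIrep q]; exact hInotB q
      · rw [← hIrep p, ← hIrep q]
        exact ⟨hne'.some, hne'.some_mem.2, hne'.some_mem.1⟩
    exact hne (Set.Subset.antisymm h1 h2)
  set Sp : LI → Set (Set ℂ) := fun p => {l' | l' ∈ LB ∧ (l' ∩ (p : Set ℂ)).Nonempty} with hSp
  have hSsub : ∀ (p : LI), ∀ l' ∈ Sp p, l' ⊆ (p : Set ℂ) := by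
    intro p l' hl'
    obtain ⟨a', b', hab', _, hrep'⟩ := hLBarc l' hl'.1
    rw [hrep', hIrep p]
    refine arc_subset_of_endpoints_mem ?_ (hIc p) (hId p) ?_
    · rw [← hrep']
      rw [Set.eq_empty_iff_forall_notMem]
      rintro x ⟨hx1, hx2⟩
      exact hLBnotB l' hl'.1 x hx1 hx2
    · rw [← hrep', ← hIrep p]
      exact hl'.2
  have hScov : ∀ p : LI, (p : Set ℂ) ⊆ ⋃₀ (Sp p) := by
    intro p x hx
    obtain ⟨l', hl', hx'⟩ := hIsubUB p hx
    exact ⟨l', ⟨hl', ⟨x, hx', hx⟩⟩, hx'⟩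
  have hIbound : ∀ p : LI, F ↑p ≤ ∑' l' : Sp p, F ↑l' := by
    intro p
    simp only [hFdef]
    apply h_subadd hh (mC ↑p) (fun l' : Sp p => mC ↑l') (mC_ne_top _)
    · intro l'
      exact measure_mono (hSsub p l' l'.2)
    · calc mC ↑p ≤ mC (⋃₀ Sp p) := measure_mono (hScov p)
        _ = mC (⋃ l' ∈ Sp p, l') := by rw [Set.sUnion_eq_biUnion]
        _ ≤ ∑' l' : Sp p, mC ↑l' :=
            measure_biUnion_le mC (hLBc.mono (fun l' hl' => hl'.1)) _
  have hI : (∑' p : LI, F ↑p) ≤ ∑' l : LB, F ↑l := by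
    have hinj : Function.Injective
        (fun x : Σ p : LI, Sp p => (⟨(x.2 : Set ℂ), x.2.2.1⟩ : LB)) := by
      intro x y hxy
      have hval : ((x.2 : Set ℂ)) = ((y.2 : Set ℂ)) := congrArg Subtype.val hxy
      obtain ⟨p1, l1⟩ := x
      obtain ⟨p2, l2⟩ := y
      have hp : p1 = p2 := by
        apply Subtype.ext
        by_contra hne
        have h1 : (l1 : Set ℂ) ⊆ (p1 : Set ℂ) := hSsub p1 _ l1.2
        have h2 : (l1 : Set ℂ) ⊆ (p2 : Set ℂ) := by
          rw [hval]
          exact hSsub p2 _ l2.2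
        obtain ⟨z, hz⟩ := l1.2.2
        have : z ∈ (p1 : Set ℂ) ∩ (p2 : Set ℂ) := ⟨hz.2, h2 hz.1⟩
        rw [hIdisj p1 p2 hne] at this
        exact this
      subst hp
      exact congrArg (Sigma.mk p1) (Subtype.ext hval)
    calc (∑' p : LI, F ↑p) ≤ ∑' p : LI, ∑' l' : Sp p, F ↑l' := ENNReal.tsum_le_tsum hIbound
      _ = ∑' x : Σ p : LI, Sp p, F ↑x.2 :=
          (ENNReal.tsum_sigma' (fun x : Σ p : LI, Sp p => F ↑x.2)).symm
      _ = ∑' x : Σ p : LI, Sp p,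
            (fun l : LB => F ↑l) ((fun x : Σ p : LI, Sp p => (⟨(x.2 : Set ℂ), x.2.2.1⟩ : LB)) x) := rfl
      _ ≤ ∑' l : LB, F ↑l := ENNReal.tsum_comp_le_tsum_of_injective hinj (fun l : LB => F ↑l)
  -- assemble
  refine ⟨LC, hLCc, hLCarc, hcover, ?_⟩
  have hchain : (∑' p : LC, F ↑p) ≤ (∑' l : LA, F ↑l) + (∑' l : LA, F ↑l) + ∑' l : LB, F ↑l := by
    calc (∑' p : LC, F ↑p) ≤ ∑' p : ↑(LEl ∪ LEr ∪ LI), F ↑p :=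
          ENNReal.tsum_mono_subtype _ hsplit
      _ ≤ (∑' p : ↑(LEl ∪ LEr), F ↑p) + ∑' p : LI, F ↑p := ENNReal.tsum_union_le _ _ _
      _ ≤ ((∑' p : LEl, F ↑p) + ∑' p : LEr, F ↑p) + ∑' p : LI, F ↑p :=
          add_le_add (ENNReal.tsum_union_le _ _ _) le_rfl
      _ ≤ (∑' l : LA, F ↑l) + (∑' l : LA, F ↑l) + ∑' l : LB, F ↑l :=
          add_le_add (add_le_add hEl hEr) hI
  intro htop
  rw [htop] at hchain
  exact (ENNReal.add_ne_top.2 ⟨ENNReal.add_ne_top.2 ⟨hLAsum, hLAsum⟩, hLBsum⟩)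
    (top_le_iff.1 hchain)
end
end

section
/- If A and B are h-Carleson subsets of 𝕋 (for the same measure function h), then their intersection A ∩ B is an h-Carleson set. -/
open MeasureTheory Set Filter Topology
open scoped ENNReal

noncomputable section

/-- The intersection of two `h`-Carleson sets is an `h`-Carleson set. -/
theorem IsHCarleson.inter
    (h : ℝ → ℝ) (hh : IsMeasureFunction h) (A B : Set ℂ)
    (hA : IsHCarleson h A) (hB : IsHCarleson h B) :
    IsHCarleson h (A ∩ B) := by
  obtain ⟨hAsub, hAcl, LA, hLAc, hLAarc, hLAeq, hLAfin⟩ := hA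
  obtain ⟨hBsub, hBcl, LB, hLBc, hLBarc, hLBeq, hLBfin⟩ := hB
  refine ⟨(inter_subset_left).trans hAsub, hAcl.inter hBcl, LA ∪ LB, hLAc.union hLBc,
    ?_, ?_, ?_⟩
  · intro ℓ hℓ
    rcases hℓ with h | h
    exacts [hLAarc ℓ h, hLBarc ℓ h]
  · rw [sUnion_union, ← hLAeq, ← hLBeq]
    ext x
    simp only [mem_diff, mem_inter_iff, mem_union]
    tauto
  · exact ne_top_of_le_ne_top (ENNReal.add_ne_top.2 ⟨hLAfin, hLBfin⟩)
      (ENNReal.tsum_union_le (fun ℓ => ENNReal.ofReal (h (mC ℓ).toReal)) LA LB)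
end
end

section
/- Let E be any Lebesgue measurable subset of 𝕋 and h a measure function. Then there exist disjoint measurable sets F and Ẽ and a set N of Lebesgue measure zero with E = (F ∪ Ẽ) \ N, such that: (i) every h-Carleson set that is almost contained in E is almost contained in Ẽ; and (ii) Ẽ equals, up to a set of Lebesgue measure zero, a countable union of h-Carleson sets each almost contained in E. -/
open MeasureTheory Set Filter Topology
open scoped ENNReal

noncomputable section

lemma empty_isHCarleson (h : ℝ → ℝ) : IsHCarleson h ∅ := by
  have hπ := Real.pi_pos
  refine ⟨empty_subset _, isClosed_empty,
    {circleMap 0 1 '' Set.Ioo 0 (2 * Real.pi), circleMap 0 1 '' Set.Ioo (-Real.pi) Real.pi},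
    ((Set.finite_singleton _).insert _).countable, ?_, ?_, ?_⟩
  · rintro ℓ (rfl | rfl)
    · exact ⟨0, 2 * Real.pi, by linarith, by linarith, rfl⟩
    · exact ⟨-Real.pi, Real.pi, by linarith, by linarith, rfl⟩
  · rw [Set.diff_empty, Set.sUnion_pair]
    apply Set.Subset.antisymm
    · intro z hz
      have habs : ‖z‖ = 1 := by
        simpa [unitCircleSet, Complex.dist_eq] using hz
      have hz' : circleMap 0 1 (Complex.arg z) = z := by
        have := Complex.norm_mul_exp_arg_mul_I z
        rw [habs] at this
        simpa [circleMap] using this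
      rcases eq_or_lt_of_le (Complex.arg_le_pi z) with hp | hp
      · left
        exact ⟨Complex.arg z, ⟨by rw [hp]; linarith, by rw [hp]; linarith⟩, hz'⟩
      · right
        exact ⟨Complex.arg z, ⟨Complex.neg_pi_lt_arg z, hp⟩, hz'⟩
    · rintro z (⟨t, _, rfl⟩ | ⟨t, _, rfl⟩) <;>
        exact circleMap_mem_sphere 0 zero_le_one t
  · have hfin : ({circleMap 0 1 '' Set.Ioo 0 (2 * Real.pi),
        circleMap 0 1 '' Set.Ioo (-Real.pi) Real.pi} : Set (Set ℂ)).Finite :=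
      (Set.finite_singleton _).insert _
    haveI := hfin.fintype
    rw [tsum_fintype]
    exact (ENNReal.sum_lt_top.mpr (fun _ _ => ENNReal.ofReal_lt_top)).ne


theorem exists_maximal_carleson_union
    (h : ℝ → ℝ) (E : Set ℂ) :
    ∃ V : Set ℂ, MeasurableSet V ∧
      (∀ A : Set ℂ, IsHCarleson h A → mC (A \ E) = 0 → mC (A \ V) = 0) ∧
      (∃ G : ℕ → Set ℂ, (∀ n, IsHCarleson h (G n) ∧ mC (G n \ E) = 0) ∧ V = ⋃ n, G n) := by
  classical
  set P : Set ℂ → Prop := fun U => ∃ G : ℕ → Set ℂ,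
    (∀ n, IsHCarleson h (G n) ∧ mC (G n \ E) = 0) ∧ U = ⋃ n, G n with hP
  have hPempty : P ∅ := ⟨fun _ => ∅, fun n => ⟨empty_isHCarleson h, by simp⟩, by simp⟩
  have hPmeas : ∀ U, P U → MeasurableSet U := by
    rintro U ⟨G, hG, rfl⟩
    exact MeasurableSet.iUnion fun n => (hG n).1.2.1.measurableSet
  set s : ℝ≥0∞ := ⨆ (U : Set ℂ) (_ : P U), mC U with hs
  have hsne : s ≠ ⊤ := by
    refine ne_top_of_le_ne_top (mC_ne_top Set.univ) ?_
    exact iSup₂_le fun U _ => measure_mono (Set.subset_univ U)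
  have key : ∀ n : ℕ, ∃ U, P U ∧ s ≤ mC U + ((n : ℝ≥0∞))⁻¹ := by
    intro n
    by_cases hc : s ≤ ((n : ℝ≥0∞))⁻¹
    · exact ⟨∅, hPempty, le_trans hc (by simp)⟩
    · push_neg at hc
      have hinvne : ((n : ℝ≥0∞))⁻¹ ≠ 0 :=
        ENNReal.inv_ne_zero.mpr (ENNReal.natCast_ne_top n)
      have hsne0 : s ≠ 0 := fun h0 => by simp [h0] at hc
      have hlt : s - ((n : ℝ≥0∞))⁻¹ < s := ENNReal.sub_lt_self hsne hsne0 hinvne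
      rw [hs] at hlt
      obtain ⟨U, hU⟩ := lt_iSup_iff.mp hlt
      obtain ⟨hPU, hlt2⟩ := lt_iSup_iff.mp hU
      refine ⟨U, hPU, ?_⟩
      calc s = s - ((n : ℝ≥0∞))⁻¹ + ((n : ℝ≥0∞))⁻¹ := (tsub_add_cancel_of_le hc.le).symm
        _ ≤ mC U + ((n : ℝ≥0∞))⁻¹ := add_le_add hlt2.le le_rfl
  choose U hPU hle using key
  set V : Set ℂ := ⋃ n, U n with hV
  have hPV : P V := by
    choose G hG hUeq using hPU
    refine ⟨fun k => G (Nat.pairEquiv.symm k).1 (Nat.pairEquiv.symm k).2,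
      fun k => hG _ _, ?_⟩
    have h1 : (⋃ k, G (Nat.pairEquiv.symm k).1 (Nat.pairEquiv.symm k).2)
        = ⋃ p : ℕ × ℕ, G p.1 p.2 :=
      Nat.pairEquiv.symm.surjective.iUnion_comp (fun p => G p.1 p.2)
    rw [h1, Set.iUnion_prod']
    simp only [hV]
    exact Set.iUnion_congr hUeq
  have hVmeas := hPmeas V hPV
  have hVle : mC V ≤ s := le_iSup₂ (f := fun (U : Set ℂ) (_ : P U) => mC U) V hPV
  have hsleV : s ≤ mC V := by
    have hall : ∀ n : ℕ, s ≤ mC V + ((n : ℝ≥0∞))⁻¹ := fun n =>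
      (hle n).trans (add_le_add (measure_mono (Set.subset_iUnion U n)) le_rfl)
    have htend : Filter.Tendsto (fun n : ℕ => mC V + ((n : ℝ≥0∞))⁻¹)
        Filter.atTop (nhds (mC V)) := by
      simpa using ENNReal.tendsto_inv_nat_nhds_zero.const_add (mC V)
    exact ge_of_tendsto htend (Filter.Eventually.of_forall hall)
  have hVs : mC V = s := le_antisymm hVle hsleV
  refine ⟨V, hVmeas, ?_, hPV⟩
  intro A hA hAE
  have hAmeas : MeasurableSet A := hA.2.1.measurableSet
  have hPVA : P (V ∪ A) := by
    obtain ⟨G, hG, hVeq⟩ := hPV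
    refine ⟨fun n => Nat.casesOn n A G, fun n => ?_, ?_⟩
    · cases n with
      | zero => exact ⟨hA, hAE⟩
      | succ k => exact hG k
    · apply Set.Subset.antisymm
      · rintro x (hx | hx)
        · rw [hVeq] at hx
          obtain ⟨_, ⟨k, rfl⟩, hk⟩ := hx
          exact Set.mem_iUnion.mpr ⟨k + 1, hk⟩
        · exact Set.mem_iUnion.mpr ⟨0, hx⟩
      · refine Set.iUnion_subset fun n => ?_
        cases n with
        | zero => exact Set.subset_union_right
        | succ k =>
          exact le_trans (hVeq ▸ Set.subset_iUnion G k) Set.subset_union_left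
  have h1 : mC (V ∪ A) = mC V + mC (A \ V) := by
    rw [← Set.union_diff_self]
    exact measure_union disjoint_sdiff_right (hAmeas.diff hVmeas)
  have h2 : mC (V ∪ A) ≤ s := le_iSup₂ (f := fun (U : Set ℂ) (_ : P U) => mC U) _ hPVA
  rw [h1, ← hVs] at h2
  have h3 : mC (A \ V) ≤ 0 :=
    (ENNReal.add_le_add_iff_left (mC_ne_top V)).mp (h2.trans_eq (add_zero _).symm)
  exact le_antisymm h3 zero_le

/-- Every measurable subset `E` of the circle admits a core-residual
decomposition with respect to any measure function `h`: there are disjoint measurable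
sets `F` (the residual) and `Ẽ` (the core) and a null set `N` with `E = (F ∪ Ẽ) \ N`,
every `h`-Carleson set almost contained in `E` is almost contained in `Ẽ`, and `Ẽ` is,
up to a null set, a countable union of `h`-Carleson sets almost contained in `E`. -/
theorem exists_coreResidualDecomp
    (h : ℝ → ℝ) (hh : IsMeasureFunction h) (E : Set ℂ)
    (hE : MeasurableSet E) (hEsub : E ⊆ unitCircleSet) :
    ∃ F Etilde : Set ℂ, IsCoreResidualDecomp h E Etilde F := by
  obtain ⟨V, hVmeas, hmax, G, hG, hVeq⟩ := exists_maximal_carleson_union h E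
  refine ⟨E \ V, E ∩ V, hE.inter hVmeas, hE.diff hVmeas, ?_,
    ⟨∅, measure_empty, by rw [Set.diff_empty, Set.diff_union_inter]⟩, ?_, ?_⟩
  · exact Set.disjoint_left.mpr fun x hx hx2 => hx2.2 hx.2
  · intro A hA hAE
    refine measure_mono_null ?_ (measure_union_null hAE (hmax A hA hAE))
    intro x hx
    by_cases hxE : x ∈ E
    · exact Or.inr ⟨hx.1, fun hv => hx.2 ⟨hxE, hv⟩⟩
    · exact Or.inl ⟨hx.1, hxE⟩
  · refine ⟨G, hG, ?_⟩
    rw [← hVeq]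
    have h1 : (E ∩ V) \ V = ∅ := Set.diff_eq_empty.mpr Set.inter_subset_right
    have h2 : mC (V \ (E ∩ V)) = 0 := by
      have hsub : V \ (E ∩ V) ⊆ V \ E := fun x hx =>
        ⟨hx.1, fun hE' => hx.2 ⟨hE', hx.1⟩⟩
      refine measure_mono_null hsub ?_
      refine measure_mono_null ?_
        (measure_iUnion_null (s := fun n => G n \ E) fun n => (hG n).2)
      rw [hVeq]
      exact Set.iUnion_diff E G ▸ Set.Subset.rfl
    rw [h1, Set.empty_union]
    exact h2
end
end

section
/- Let E ⊆ 𝕋 be measurable, h a measure function, and I an arc of 𝕋. If (core_h(E), res_h(E)) is a core-residual decomposition of E with respect to h, then (I ∩ core_h(E), I ∩ res_h(E)) is a core-residual decomposition of I ∩ E with respect to h; that is, core_h(I ∩ E) = I ∩ core_h(E) and res_h(I ∩ E) = I ∩ res_h(E), up to sets of Lebesgue measure zero. -/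
open MeasureTheory Set Filter Topology
open scoped ENNReal

noncomputable section

lemma circleMap_eq_circleMap_iff' {s t : ℝ} :
    circleMap 0 1 s = circleMap 0 1 t ↔ ∃ n : ℤ, s = t + n * (2 * Real.pi) := by
  simp only [circleMap, zero_add, Complex.ofReal_one, one_mul]
  rw [Complex.exp_eq_exp_iff_exists_int]
  constructor
  · rintro ⟨n, hn⟩
    refine ⟨n, ?_⟩
    have h2 : ((s : ℂ)) * Complex.I = ((t + n * (2 * Real.pi) : ℝ) : ℂ) * Complex.I := by
      push_cast
      linear_combination hn
    have := mul_right_cancel₀ Complex.I_ne_zero h2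
    exact_mod_cast this
  · rintro ⟨n, hn⟩
    refine ⟨n, ?_⟩
    rw [hn]; push_cast; ring

lemma compl_closedArc {c d : ℝ} (hcd : c ≤ d) (hlt : d - c < 2 * Real.pi) :
    unitCircleSet \ (circleMap 0 1 '' Icc c d) = circleMap 0 1 '' Ioo d (c + 2 * Real.pi) := by
  have hπ := Real.two_pi_pos
  have hrange : unitCircleSet = range (circleMap 0 1) := by
    rw [range_circleMap]; simp [unitCircleSet]
  have hdisj : ∀ s ∈ Ioo d (c + 2 * Real.pi), ∀ t ∈ Icc c d,
      circleMap 0 1 s ≠ circleMap 0 1 t := by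
    rintro s ⟨hs1, hs2⟩ t ⟨ht1, ht2⟩ heq
    obtain ⟨n, hn⟩ := circleMap_eq_circleMap_iff'.1 heq
    have h1 : (0:ℝ) < n * (2 * Real.pi) := by nlinarith
    have h2 : (n:ℝ) * (2 * Real.pi) < 2 * Real.pi := by nlinarith
    have hn0 : (0:ℤ) < n := by
      by_contra hc
      push_neg at hc
      have : (n:ℝ) ≤ 0 := by exact_mod_cast hc
      nlinarith
    have : (1:ℝ) ≤ (n:ℝ) := by exact_mod_cast hn0
    nlinarith
  have hcover : range (circleMap 0 1) =
      circleMap 0 1 '' Icc c d ∪ circleMap 0 1 '' Ioo d (c + 2 * Real.pi) := by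
    rw [← (periodic_circleMap 0 1).image_Ioc hπ d]
    have hsplit : Ioc d (d + 2 * Real.pi) =
        Ioo d (c + 2 * Real.pi) ∪ Icc (c + 2 * Real.pi) (d + 2 * Real.pi) :=
      (Ioo_union_Icc_eq_Ioc (by linarith) (by linarith)).symm
    rw [hsplit, image_union, union_comm]
    congr 1
    have hIcc : Icc (c + 2 * Real.pi) (d + 2 * Real.pi) =
        (fun x => x + 2 * Real.pi) '' Icc c d := (image_add_const_Icc (2 * Real.pi) c d).symm
    rw [hIcc, image_image]
    refine image_congr fun x _ => ?_
    exact (periodic_circleMap 0 1) x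
  ext x
  constructor
  · rintro ⟨hx1, hx2⟩
    rw [hrange, hcover] at hx1
    exact hx1.resolve_left hx2
  · rintro ⟨s, hs, rfl⟩
    refine ⟨?_, ?_⟩
    · rw [hrange]; exact mem_range_self s
    · rintro ⟨t, ht, heq⟩
      exact hdisj s hs t ht heq.symm

lemma Ioo_eq_iUnion_Icc {a b : ℝ} (hab : a < b) :
    Ioo a b = ⋃ k : ℕ, Icc (a + (b - a) / 2 ^ (k + 1)) (b - (b - a) / 2 ^ (k + 1)) := by
  have hba : (0:ℝ) < b - a := sub_pos.2 hab
  ext x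
  simp only [mem_Ioo, mem_iUnion, mem_Icc]
  constructor
  · rintro ⟨h1, h2⟩
    have hmin : 0 < min (x - a) (b - x) := lt_min (sub_pos.2 h1) (sub_pos.2 h2)
    obtain ⟨k, hk⟩ := exists_pow_lt_of_lt_one (div_pos hmin hba) (by norm_num : (1:ℝ)/2 < 1)
    have hk' : (b - a) * (1/2:ℝ) ^ k < min (x - a) (b - x) := by
      rw [lt_div_iff₀ hba] at hk
      linarith [hk]
    have heq : (b - a) * (1/2:ℝ) ^ k = (b - a) / 2 ^ k := by
      rw [div_pow, one_pow]; ring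
    have hlt2 : (b - a) / 2 ^ (k + 1) < (b - a) / 2 ^ k := by
      gcongr
      · exact one_lt_two
      · exact Nat.lt_succ_self k
    refine ⟨k, by
      constructor <;> nlinarith [lt_min_iff.1 (heq ▸ hk'), hlt2]⟩
  · rintro ⟨k, hk1, hk2⟩
    have hpos : (0:ℝ) < (b - a) / 2 ^ (k + 1) := by positivity
    constructor <;> linarith

lemma isOpenArc_measurableSet {A : Set ℂ} (hA : IsOpenArc A) : MeasurableSet A := by
  obtain ⟨a, b, hab, -, rfl⟩ := hA
  rw [Ioo_eq_iUnion_Icc hab, image_iUnion]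
  exact MeasurableSet.iUnion fun k =>
    ((isCompact_Icc.image (continuous_circleMap 0 1)).isClosed).measurableSet

lemma isHCarleson_inter_closedArc (h : ℝ → ℝ) {A : Set ℂ} (hA : IsHCarleson h A)
    {c d : ℝ} (hcd : c ≤ d) (hlt : d - c < 2 * Real.pi) :
    IsHCarleson h (A ∩ circleMap 0 1 '' Icc c d) := by
  obtain ⟨hsub, hcl, L, hLc, hLarc, hLeq, hLsum⟩ := hA
  have hJcl : IsClosed (circleMap 0 1 '' Icc c d) :=
    (isCompact_Icc.image (continuous_circleMap 0 1)).isClosed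
  refine ⟨fun x hx => hsub hx.1, hcl.inter hJcl,
    insert (circleMap 0 1 '' Ioo d (c + 2 * Real.pi)) L, hLc.insert _, ?_, ?_, ?_⟩
  · rintro ℓ hℓ
    rcases hℓ with rfl | hℓ
    · exact ⟨d, c + 2 * Real.pi, by linarith, by linarith, rfl⟩
    · exact hLarc ℓ hℓ
  · rw [sUnion_insert, ← hLeq, ← compl_closedArc hcd hlt]
    ext x
    simp only [mem_diff, mem_inter_iff, mem_union]
    tauto
  · have hle : ∑' ℓ : ↑(insert (circleMap 0 1 '' Ioo d (c + 2 * Real.pi)) L),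
        ENNReal.ofReal (h (mC ↑ℓ).toReal) ≤
        ENNReal.ofReal (h (mC (circleMap 0 1 '' Ioo d (c + 2 * Real.pi))).toReal) +
          ∑' ℓ : L, ENNReal.ofReal (h (mC ↑ℓ).toReal) := by
      rw [← singleton_union]
      refine le_trans (ENNReal.tsum_union_le
        (fun ℓ : Set ℂ => ENNReal.ofReal (h (mC ℓ).toReal)) _ _) ?_
      exact add_le_add
        (tsum_singleton _ (fun ℓ : Set ℂ => ENNReal.ofReal (h (mC ℓ).toReal))).le le_rfl
    exact (lt_of_le_of_lt hle (ENNReal.add_lt_top.2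
      ⟨ENNReal.ofReal_lt_top, hLsum.lt_top⟩)).ne

/-- The core-residual decomposition localizes to arcs: if
`(core, res)` is a core-residual decomposition of `E` with respect to `h` and `I` is an
arc, then `(I ∩ core, I ∩ res)` is a core-residual decomposition of `I ∩ E` with respect
to `h`; i.e. `core_h(I ∩ E) = I ∩ core_h(E)` and `res_h(I ∩ E) = I ∩ res_h(E)` up to
null sets (by uniqueness of the decomposition). -/
theorem coreResidualDecomp_inter_arc
    (h : ℝ → ℝ) (hh : IsMeasureFunction h) (E core res I : Set ℂ)
    (hE : MeasurableSet E) (hEsub : E ⊆ unitCircleSet) (hI : IsOpenArc I)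
    (hcr : IsCoreResidualDecomp h E core res) :
    IsCoreResidualDecomp h (I ∩ E) (I ∩ core) (I ∩ res) := by
  obtain ⟨a, b, hab, hble, rfl⟩ := hI
  obtain ⟨hmc, hmr, hdisj, ⟨N, hN, hEeq⟩, hcarl, G, hG, hGnull⟩ := hcr
  have hπ := Real.two_pi_pos
  have hba : (0:ℝ) < b - a := sub_pos.2 hab
  have hImeas : MeasurableSet (circleMap 0 1 '' Ioo a b) :=
    isOpenArc_measurableSet ⟨a, b, hab, hble, rfl⟩
  refine ⟨hImeas.inter hmc, hImeas.inter hmr,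
    hdisj.mono inter_subset_right inter_subset_right, ⟨N, hN, ?_⟩, ?_, ?_⟩
  · rw [hEeq]; ext x
    simp only [mem_inter_iff, mem_diff, mem_union]
    tauto
  · intro A hA hnull
    have h1 : mC (A \ circleMap 0 1 '' Ioo a b) = 0 :=
      measure_mono_null (diff_subset_diff_right inter_subset_left) hnull
    have h2 : mC (A \ E) = 0 :=
      measure_mono_null (diff_subset_diff_right inter_subset_right) hnull
    have h3 := hcarl A hA h2
    refine measure_mono_null (fun x hx => ?_) (measure_union_null h1 h3)
    by_cases hxI : x ∈ circleMap 0 1 '' Ioo a b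
    · exact Or.inr ⟨hx.1, fun hc => hx.2 ⟨hxI, hc⟩⟩
    · exact Or.inl ⟨hx.1, hxI⟩
  · set J : ℕ → Set ℂ := fun k =>
      circleMap 0 1 '' Icc (a + (b - a) / 2 ^ (k + 1)) (b - (b - a) / 2 ^ (k + 1)) with hJdef
    have hδpos : ∀ k : ℕ, (0:ℝ) < (b - a) / 2 ^ (k + 1) := fun k => by positivity
    have hδle : ∀ k : ℕ, 2 * ((b - a) / 2 ^ (k + 1)) ≤ b - a := by
      intro k
      have h2k : (2:ℝ) ≤ 2 ^ (k + 1) := by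
        calc (2:ℝ) = 2 ^ 1 := (pow_one 2).symm
        _ ≤ 2 ^ (k + 1) := by
            apply pow_le_pow_right₀ one_le_two
            omega
      have : (b - a) / 2 ^ (k + 1) ≤ (b - a) / 2 := by gcongr
      linarith
    have hJI : ∀ k, J k ⊆ circleMap 0 1 '' Ioo a b := by
      intro k
      intro x hx
      rw [hJdef] at hx
      obtain ⟨t, ht, rfl⟩ := hx
      rw [mem_Icc] at ht
      exact ⟨t, mem_Ioo.2 ⟨by linarith [hδpos k, ht.1], by linarith [hδpos k, ht.2]⟩, rfl⟩
    have hIunion : (⋃ k, J k) = circleMap 0 1 '' Ioo a b := by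
      rw [hJdef, ← image_iUnion, ← Ioo_eq_iUnion_Icc hab]
    refine ⟨fun m => G m.unpair.1 ∩ J m.unpair.2, fun m => ⟨?_, ?_⟩, ?_⟩
    · have h1 : a + (b - a) / 2 ^ (m.unpair.2 + 1) ≤ b - (b - a) / 2 ^ (m.unpair.2 + 1) := by
        linarith [hδle m.unpair.2]
      have h2 : (b - (b - a) / 2 ^ (m.unpair.2 + 1)) -
          (a + (b - a) / 2 ^ (m.unpair.2 + 1)) < 2 * Real.pi := by
        linarith [hδpos m.unpair.2]
      exact isHCarleson_inter_closedArc h (hG m.unpair.1).1 h1 h2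
    · refine measure_mono_null ?_ (hG m.unpair.1).2
      rintro x ⟨⟨hxG, hxJ⟩, hx2⟩
      exact ⟨hxG, fun hxE => hx2 ⟨hJI _ hxJ, hxE⟩⟩
    · have hU : (⋃ m, G (Nat.unpair m).1 ∩ J (Nat.unpair m).2) =
          (⋃ n, G n) ∩ circleMap 0 1 '' Ioo a b := by
        ext x
        simp only [mem_iUnion, mem_inter_iff]
        constructor
        · rintro ⟨m, hxG, hxJ⟩
          exact ⟨⟨_, hxG⟩, hJI _ hxJ⟩
        · rintro ⟨⟨n, hxG⟩, hxI⟩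
          have hx : x ∈ ⋃ k, J k := hIunion ▸ hxI
          obtain ⟨k, hk⟩ := mem_iUnion.1 hx
          refine ⟨Nat.pair n k, ?_, ?_⟩
          · rw [Nat.unpair_pair]; exact hxG
          · rw [Nat.unpair_pair]; exact hk
      rw [hU]
      refine measure_mono_null (fun x hx => ?_) hGnull
      rcases hx with ⟨⟨hxI, hxc⟩, hx2⟩ | ⟨⟨hxG, hxI⟩, hx2⟩
      · exact Or.inl ⟨hxc, fun hc => hx2 ⟨hc, hxI⟩⟩
      · exact Or.inr ⟨hxG, fun hc => hx2 ⟨hxI, hc⟩⟩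
end
end

section
/- Let h be a measure function, E ⊆ 𝕋 measurable, and I an arc of 𝕋. If C is a measurable subset of I that is almost contained in E, then M⁰_h(I \ C) = M⁰_h(I \ (C ∩ core_h(E))). -/
open MeasureTheory Set Filter Topology
open scoped ENNReal

noncomputable section

namespace Stmt9Aux

lemma arc_sub (s : Set ℝ) : circleMap 0 1 '' s ⊆ unitCircleSet := by
  rintro _ ⟨θ, -, rfl⟩
  exact circleMap_mem_sphere 0 zero_le_one θ

lemma cm_eq_iff {θ τ : ℝ} (hE : circleMap 0 1 θ = circleMap 0 1 τ) :
    ∃ k : ℤ, θ = τ + k * (2 * Real.pi) := by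
  have h1 : Complex.exp (θ * Complex.I) = Complex.exp (τ * Complex.I) := by
    simpa [circleMap] using hE
  obtain ⟨n, hn⟩ := Complex.exp_eq_exp_iff_exists_int.mp h1
  refine ⟨n, ?_⟩
  have h2 : (θ : ℂ) * Complex.I = ((τ + (n : ℝ) * (2 * Real.pi) : ℝ) : ℂ) * Complex.I := by
    push_cast
    linear_combination hn
  have h3 := mul_right_cancel₀ Complex.I_ne_zero h2
  exact_mod_cast h3

lemma exists_theta {z : ℂ} (hz : z ∈ unitCircleSet) (c : ℝ) :
    ∃ θ ∈ Set.Ico c (c + 2 * Real.pi), circleMap 0 1 θ = z := by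
  have hz1 : ‖z‖ = 1 := by
    simpa [unitCircleSet, Complex.dist_eq] using hz
  have h0 : circleMap 0 1 (Complex.arg z) = z := by
    have := Complex.norm_mul_exp_arg_mul_I z
    rw [hz1] at this
    simpa [circleMap] using this
  refine ⟨toIcoMod Real.two_pi_pos c (Complex.arg z), toIcoMod_mem_Ico _ _ _, ?_⟩
  rw [toIcoMod, (periodic_circleMap 0 1).sub_zsmul_eq, h0]

lemma compl_arc {a b : ℝ} (hab : a < b) (h2 : b - a ≤ 2 * Real.pi) :
    unitCircleSet \ (circleMap 0 1 '' Set.Ioo a b) =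
      circleMap 0 1 '' Set.Icc b (a + 2 * Real.pi) := by
  have hπ := Real.pi_pos
  ext z
  constructor
  · rintro ⟨hz, hnz⟩
    obtain ⟨θ, hθ, rfl⟩ := exists_theta hz b
    refine ⟨θ, ⟨hθ.1, ?_⟩, rfl⟩
    by_contra hgt
    push_neg at hgt
    exact hnz ⟨θ - 2 * Real.pi, ⟨by linarith, by linarith [hθ.2]⟩,
      (periodic_circleMap 0 1).sub_eq θ⟩
  · rintro ⟨θ, hθ, rfl⟩
    refine ⟨circleMap_mem_sphere 0 zero_le_one θ, ?_⟩
    rintro ⟨τ, hτ, heq⟩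
    obtain ⟨k, hk⟩ := cm_eq_iff heq.symm
    have h1 : 0 < (k : ℝ) * (2 * Real.pi) := by
      have h1a := hθ.1; have h1b := hτ.2; linarith [hk]
    have h2' : (k : ℝ) * (2 * Real.pi) < 2 * Real.pi := by
      have h2a := hθ.2; have h2b := hτ.1; linarith [hk]
    have hk0 : 1 ≤ k := by
      by_contra hlt
      push_neg at hlt
      have hk0' : k ≤ 0 := by omega
      have : (k : ℝ) ≤ 0 := by exact_mod_cast hk0'
      nlinarith
    have hk1 : (1 : ℝ) ≤ (k : ℝ) := by exact_mod_cast hk0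
    nlinarith

lemma image_shift (a b : ℝ) :
    circleMap 0 1 '' Set.Icc (a + 2 * Real.pi) (b + 2 * Real.pi) =
      circleMap 0 1 '' Set.Icc a b := by
  rw [← Set.image_add_const_Icc, Set.image_image]
  exact Set.image_congr fun x _ => periodic_circleMap 0 1 x

lemma mC_null {s : Set ℂ} (hs : s.Countable) : mC s = 0 := by
  have h1 : (circleMap 0 1 ⁻¹' s).Countable := hs.preimage_circleMap 0 one_ne_zero
  rw [mC, Measure.smul_apply, Measure.map_apply (measurable_circleMap 0 1) hs.measurableSet,
    Measure.restrict_apply' measurableSet_Ioc]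
  have h2 : volume (circleMap 0 1 ⁻¹' s ∩ Set.Ioc 0 (2 * Real.pi)) = 0 :=
    measure_mono_null Set.inter_subset_left (h1.measure_zero _)
  rw [h2, smul_zero]

lemma sUnion_sub {L : Set (Set ℂ)} (hL : ∀ ℓ ∈ L, IsOpenArc ℓ) : ⋃₀ L ⊆ unitCircleSet := by
  refine Set.sUnion_subset fun ℓ hℓ => ?_
  obtain ⟨a, b, -, -, rfl⟩ := hL ℓ hℓ
  exact arc_sub _

lemma isClosed_compl_arcs {L : Set (Set ℂ)} (hL : ∀ ℓ ∈ L, IsOpenArc ℓ) :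
    IsClosed (unitCircleSet \ ⋃₀ L) := by
  have he : unitCircleSet \ ⋃₀ L = unitCircleSet ∩ ⋂ ℓ ∈ L, (unitCircleSet \ ℓ) := by
    ext x
    simp only [Set.mem_diff, Set.mem_sUnion, Set.mem_inter_iff, Set.mem_iInter]
    constructor
    · rintro ⟨hx, hn⟩; exact ⟨hx, fun ℓ hℓ => ⟨hx, fun hxl => hn ⟨ℓ, hℓ, hxl⟩⟩⟩
    · rintro ⟨hx, hn⟩; exact ⟨hx, fun ⟨ℓ, hℓ, hxl⟩ => (hn ℓ hℓ).2 hxl⟩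
  rw [he]
  refine Metric.isClosed_sphere.inter (isClosed_biInter fun ℓ hℓ => ?_)
  obtain ⟨a, b, hab, h2, rfl⟩ := hL ℓ hℓ
  rw [compl_arc hab h2]
  exact (isCompact_Icc.image (continuous_circleMap 0 1)).isClosed

lemma hc0_le (h : ℝ → ℝ) {X Y : Set ℂ}
    (H : ∀ L : Set (Set ℂ), L.Countable → (∀ ℓ ∈ L, IsOpenArc ℓ) → mC (X \ ⋃₀ L) = 0 →
      (∑' ℓ : L, ENNReal.ofReal (h (mC ↑ℓ).toReal)) ≠ ⊤ → mC (Y \ ⋃₀ L) = 0) :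
    hausdorffContent0 h Y ≤ hausdorffContent0 h X := by
  unfold hausdorffContent0
  refine le_iInf fun L => le_iInf fun hc => le_iInf fun harc => le_iInf fun hcov => ?_
  by_cases hfin : (∑' ℓ : L, ENNReal.ofReal (h (mC ↑ℓ).toReal)) = ⊤
  · rw [hfin]; exact le_top
  · exact iInf_le_of_le L (iInf_le_of_le hc (iInf_le_of_le harc
      (iInf_le_of_le (H L hc harc hcov hfin) le_rfl)))

lemma cover_core_null {h : ℝ → ℝ} {E core I C U : Set ℂ}
    (hcarl_core : ∀ A : Set ℂ, IsHCarleson h A → mC (A \ E) = 0 → mC (A \ core) = 0)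
    (hCE : mC (C \ E) = 0) (hcov : mC ((I \ C) \ U) = 0)
    (A : Set ℂ) (hA : IsHCarleson h A) (hAE : mC (A \ E) = 0)
    (hAsub : ∀ x ∈ I, x ∉ U → x ∈ A) :
    mC ((I \ (C ∩ core)) \ U) = 0 := by
  have hAcore := hcarl_core A hA hAE
  have hsub : (I \ (C ∩ core)) \ U ⊆ ((I \ C) \ U) ∪ ((C \ E) ∪ (A \ core)) := by
    rintro x ⟨⟨hxI, hxnc⟩, hxU⟩
    by_cases hxC : x ∈ C
    · by_cases hxE : x ∈ E
      · exact Or.inr (Or.inr ⟨hAsub x hxI hxU, fun hco => hxnc ⟨hxC, hco⟩⟩)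
      · exact Or.inr (Or.inl ⟨hxC, hxE⟩)
    · exact Or.inl ⟨⟨hxI, hxC⟩, hxU⟩
  exact measure_mono_null hsub (measure_union_null hcov (measure_union_null hCE hAcore))

end Stmt9Aux

/-- Let `h` be a measure function, `E ⊆ 𝕋` measurable with
core-residual decomposition `(core, res)`, and `I` an arc. If `C` is a measurable subset
of `I` almost contained in `E`, then `M⁰_h(I \ C) = M⁰_h(I \ (C ∩ core_h(E)))`. -/
theorem hausdorffContent0_diff_inter_core
    (h : ℝ → ℝ) (hh : IsMeasureFunction h) (E core res I C : Set ℂ)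
    (hE : MeasurableSet E) (hEsub : E ⊆ unitCircleSet) (hI : IsOpenArc I)
    (hcr : IsCoreResidualDecomp h E core res)
    (hC : MeasurableSet C) (hCI : C ⊆ I) (hCE : mC (C \ E) = 0) :
    hausdorffContent0 h (I \ C) = hausdorffContent0 h (I \ (C ∩ core)) := by
  obtain ⟨-, -, -, -, hcarl_core, -⟩ := hcr
  obtain ⟨a, b, hab, h2, hIeq⟩ := hI
  subst hIeq
  have hπ := Real.pi_pos
  refine le_antisymm (Stmt9Aux.hc0_le h fun L hLc hLarc hcov hfin => ?_)
    (Stmt9Aux.hc0_le h fun L hLc hLarc hcov hfin => ?_)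
  · exact measure_mono_null
      (Set.diff_subset_diff_left (Set.diff_subset_diff_right Set.inter_subset_left)) hcov
  · rcases lt_or_eq_of_le h2 with hlt | h2e
    · -- proper arc: add the complementary arc J
      set J : Set ℂ := circleMap 0 1 '' Set.Ioo b (a + 2 * Real.pi) with hJ
      have hL'arc : ∀ ℓ ∈ insert J L, IsOpenArc ℓ := by
        rintro ℓ (rfl | hℓ)
        · exact ⟨b, a + 2 * Real.pi, by linarith, by linarith, rfl⟩
        · exact hLarc ℓ hℓ
      have hU' : ⋃₀ insert J L ⊆ unitCircleSet := Stmt9Aux.sUnion_sub hL'arc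
      have hsum : (∑' ℓ : ↑(insert J L), ENNReal.ofReal (h (mC ↑ℓ).toReal)) ≠ ⊤ := by
        have h1 : (∑' ℓ : ↑(insert J L), ENNReal.ofReal (h (mC ↑ℓ).toReal)) ≤
            ENNReal.ofReal (h (mC J).toReal) +
              ∑' ℓ : L, ENNReal.ofReal (h (mC ↑ℓ).toReal) := by
          rw [Set.insert_eq]
          refine le_trans (ENNReal.tsum_union_le
            (fun s => ENNReal.ofReal (h (mC s).toReal)) {J} L) ?_
          exact add_le_add_left
            (tsum_singleton J fun s => ENNReal.ofReal (h (mC s).toReal)).le _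
        exact ne_top_of_le_ne_top
          (ENNReal.add_ne_top.mpr ⟨ENNReal.ofReal_ne_top, hfin⟩) h1
      have hAcarl : IsHCarleson h (unitCircleSet \ ⋃₀ insert J L) :=
        ⟨Set.diff_subset, Stmt9Aux.isClosed_compl_arcs hL'arc,
          insert J L, hLc.insert J, hL'arc, Set.diff_diff_cancel_left hU', hsum⟩
      have hJI : J ⊆ unitCircleSet \ circleMap 0 1 '' Set.Ioo a b := by
        rw [Stmt9Aux.compl_arc hab h2]
        exact Set.image_mono Set.Ioo_subset_Icc_self
      have hTJ : unitCircleSet \ J = circleMap 0 1 '' Set.Icc a b := by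
        rw [hJ, Stmt9Aux.compl_arc (by linarith : b < a + 2 * Real.pi) (by linarith),
          Stmt9Aux.image_shift]
      have hbd : mC (circleMap 0 1 '' Set.Icc a b \ circleMap 0 1 '' Set.Ioo a b) = 0 := by
        refine Stmt9Aux.mC_null (Set.Countable.mono ?_
          (((Set.countable_singleton b).insert a).image (circleMap 0 1)))
        rintro _ ⟨⟨θ, hθ, rfl⟩, hn⟩
        have hθab : θ = a ∨ θ = b := by
          by_contra hcon
          push_neg at hcon
          exact hn ⟨θ, ⟨lt_of_le_of_ne hθ.1 (Ne.symm hcon.1), lt_of_le_of_ne hθ.2 hcon.2⟩, rfl⟩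
        exact ⟨θ, by rcases hθab with rfl | rfl <;> simp, rfl⟩
      have hAE : mC ((unitCircleSet \ ⋃₀ insert J L) \ E) = 0 := by
        have hs : (unitCircleSet \ ⋃₀ insert J L) \ E ⊆
            ((circleMap 0 1 '' Set.Ioo a b \ C) \ ⋃₀ L) ∪
              ((C \ E) ∪ (circleMap 0 1 '' Set.Icc a b \ circleMap 0 1 '' Set.Ioo a b)) := by
          rintro x ⟨⟨hxT, hxU'⟩, hxE⟩
          rw [Set.sUnion_insert] at hxU'
          have hxIcc : x ∈ circleMap 0 1 '' Set.Icc a b := by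
            rw [← hTJ]
            exact ⟨hxT, fun hxJ => hxU' (Or.inl hxJ)⟩
          by_cases hxI : x ∈ circleMap 0 1 '' Set.Ioo a b
          · by_cases hxC : x ∈ C
            · exact Or.inr (Or.inl ⟨hxC, hxE⟩)
            · exact Or.inl ⟨⟨hxI, hxC⟩, fun hxU => hxU' (Or.inr hxU)⟩
          · exact Or.inr (Or.inr ⟨hxIcc, hxI⟩)
        exact measure_mono_null hs (measure_union_null hcov (measure_union_null hCE hbd))
      refine Stmt9Aux.cover_core_null hcarl_core hCE hcov _ hAcarl hAE ?_
      intro x hxI hxU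
      refine ⟨Stmt9Aux.arc_sub _ hxI, ?_⟩
      rw [Set.sUnion_insert]
      rintro (hxJ | hxU')
      · exact (hJI hxJ).2 hxI
      · exact hxU hxU'
    · -- full circle minus a point
      have hTnull : mC (unitCircleSet \ circleMap 0 1 '' Set.Ioo a b) = 0 := by
        rw [Stmt9Aux.compl_arc hab h2, show a + 2 * Real.pi = b by linarith, Set.Icc_self]
        exact Stmt9Aux.mC_null ((Set.countable_singleton b).image (circleMap 0 1))
      have hAcarl : IsHCarleson h (unitCircleSet \ ⋃₀ L) :=
        ⟨Set.diff_subset, Stmt9Aux.isClosed_compl_arcs hLarc, L, hLc, hLarc,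
          Set.diff_diff_cancel_left (Stmt9Aux.sUnion_sub hLarc), hfin⟩
      have hAE : mC ((unitCircleSet \ ⋃₀ L) \ E) = 0 := by
        have hs : (unitCircleSet \ ⋃₀ L) \ E ⊆
            ((circleMap 0 1 '' Set.Ioo a b \ C) \ ⋃₀ L) ∪
              ((C \ E) ∪ (unitCircleSet \ circleMap 0 1 '' Set.Ioo a b)) := by
          rintro x ⟨⟨hxT, hxU⟩, hxE⟩
          by_cases hxI : x ∈ circleMap 0 1 '' Set.Ioo a b
          · by_cases hxC : x ∈ C
            · exact Or.inr (Or.inl ⟨hxC, hxE⟩)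
            · exact Or.inl ⟨⟨hxI, hxC⟩, hxU⟩
          · exact Or.inr (Or.inr ⟨hxT, hxI⟩)
        exact measure_mono_null hs (measure_union_null hcov (measure_union_null hCE hTnull))
      exact Stmt9Aux.cover_core_null hcarl_core hCE hcov _ hAcarl hAE
        (fun x hxI hxU => ⟨Stmt9Aux.arc_sub _ hxI, hxU⟩)
end
end
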